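/- If φ : PC(V) → W is a valuation, then the map φ' defined on cone indicators by φ'([C]) = (-1)^{dim C} φ([relint C]) extends to a valuation on PC(V). -/

import Mathlib

open scoped RealInnerProductSpace
open scoped Classical

noncomputable section

variable {V : Type*} [NormedAddCommGroup V] [InnerProductSpace ℝ V] [FiniteDimensional ℝ V]

/-- A polyhedral cone: a finite intersection of closed halfspaces through the origin. -/
def IsPolyCone (C : Set V) : Prop :=
  ∃ s : Finset V, C = ⋂ y ∈ s, {v : V | 0 ≤ ⟪v, y⟫}

/-- `F` is a face of the cone `C`: `F = C ∩ H_y` for some `y` (possibly `0`) with `C ⊆ H_y⁺`. -/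
def IsFaceOf (F C : Set V) : Prop :=
  ∃ y : V, C ⊆ {v : V | 0 ≤ ⟪v, y⟫} ∧ F = C ∩ {v : V | ⟪v, y⟫ = 0}

/-- Dimension of a set: the dimension of its linear span. -/
def sdim (S : Set V) : ℕ := Module.finrank ℝ (Submodule.span ℝ S)

/-- Dual cone. -/
def dualCone (C : Set V) : Set V := {v : V | ∀ c ∈ C, 0 ≤ ⟪v, c⟫}

/-- Angle cone `A(F, C) = { a • (x - z) : a > 0, x ∈ C, z ∈ relint F }`. -/
def angleCone (F C : Set V) : Set V :=
  {w : V | ∃ a : ℝ, 0 < a ∧ ∃ x ∈ C, ∃ z ∈ intrinsicInterior ℝ F, w = a • (x - z)}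

/-- Real-valued indicator function of a set. -/
def ind (S : Set V) : V → ℝ := S.indicator 1

/-- The `Γ` function: `Γ(C, x, y) = Σ_{F face of C} (-1)^(dim F) [A(F,C)](x) [F*](y)`. -/
def Γ (C : Set V) (x y : V) : ℝ :=
  ∑ᶠ F ∈ {F : Set V | IsFaceOf F C},
    (-1 : ℝ) ^ sdim F * ind (angleCone F C) x * ind (dualCone F) y

/-- `F₀` is the minimal face of `C`. -/
def IsMinimalFace (F₀ C : Set V) : Prop :=
  IsFaceOf F₀ C ∧ ∀ F : Set V, IsFaceOf F C → F₀ ⊆ F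

/-- A polyhedron: a finite intersection of translates of halfspaces. -/
def IsPolyhedron (P : Set V) : Prop :=
  ∃ s : Finset (V × ℝ), P = ⋂ p ∈ s, {v : V | p.2 ≤ ⟪v, p.1⟫}

open Filter Set





def rlim (g : ℝ → ℝ) (t : ℝ) : ℝ :=
  if h : ∃ c, ∀ᶠ y in nhdsWithin t (Set.Ioi t), g y = c then h.choose else 0

def mlim (g : ℝ → ℝ) : ℝ :=
  if h : ∃ c, ∀ᶠ y in atBot, g y = c then h.choose else 0

lemma rlim_eq {g : ℝ → ℝ} {t c : ℝ} (h : ∀ᶠ y in nhdsWithin t (Set.Ioi t), g y = c) :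
    rlim g t = c := by
  have hex : ∃ c, ∀ᶠ y in nhdsWithin t (Set.Ioi t), g y = c := ⟨c, h⟩
  rw [rlim, dif_pos hex]
  obtain ⟨y, hy1, hy2⟩ := (hex.choose_spec.and h).exists
  rw [← hy1, hy2]

lemma mlim_eq {g : ℝ → ℝ} {c : ℝ} (h : ∀ᶠ y in atBot, g y = c) : mlim g = c := by
  have hex : ∃ c, ∀ᶠ y in (atBot : Filter ℝ), g y = c := ⟨c, h⟩
  rw [mlim, dif_pos hex]
  obtain ⟨y, hy1, hy2⟩ := (hex.choose_spec.and h).exists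
  rw [← hy1, hy2]

def jump (g : ℝ → ℝ) (t : ℝ) : ℝ := g t - rlim g t

def Tame (g : ℝ → ℝ) : Prop :=
  (∀ t, ∃ c, ∀ᶠ y in nhdsWithin t (Set.Ioi t), g y = c) ∧
  (∃ c, ∀ᶠ y in atBot, g y = c) ∧ (Function.support (jump g)).Finite

def Phi1 (g : ℝ → ℝ) : ℝ := (∑ᶠ t, jump g t) - mlim g

lemma tame_zero : Tame (fun _ => (0:ℝ)) := by
  refine ⟨fun t => ⟨0, Eventually.of_forall fun _ => rfl⟩, ⟨0, Eventually.of_forall fun _ => rfl⟩, ?_⟩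
  have : jump (fun _ => (0:ℝ)) = fun _ => 0 := by
    funext t
    simp [jump, rlim_eq (g := fun _ => (0:ℝ)) (t := t) (c := 0) (Eventually.of_forall fun _ => rfl)]
  rw [this]; simp

lemma Phi1_zero : Phi1 (fun _ => (0:ℝ)) = 0 := by
  have h1 : jump (fun _ => (0:ℝ)) = fun _ => 0 := by
    funext t
    simp [jump, rlim_eq (g := fun _ => (0:ℝ)) (t := t) (c := 0) (Eventually.of_forall fun _ => rfl)]
  rw [Phi1, h1, mlim_eq (g := fun _ => (0:ℝ)) (c := 0) (Eventually.of_forall fun _ => rfl)]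
  simp

lemma jump_add {g h : ℝ → ℝ} (hg : Tame g) (hh : Tame h) :
    jump (fun t => g t + h t) = fun t => jump g t + jump h t := by
  funext t
  obtain ⟨cg, hcg⟩ := hg.1 t
  obtain ⟨ch, hch⟩ := hh.1 t
  have : rlim (fun t => g t + h t) t = cg + ch :=
    rlim_eq ((hcg.and hch).mono fun y hy => by show _ + _ = _; rw [hy.1, hy.2])
  simp [jump, this, rlim_eq hcg, rlim_eq hch]; ring

lemma Tame.add {g h : ℝ → ℝ} (hg : Tame g) (hh : Tame h) : Tame (fun t => g t + h t) := by
  refine ⟨fun t => ?_, ?_, ?_⟩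
  · obtain ⟨cg, hcg⟩ := hg.1 t; obtain ⟨ch, hch⟩ := hh.1 t
    exact ⟨cg + ch, (hcg.and hch).mono fun y hy => by show _ + _ = _; rw [hy.1, hy.2]⟩
  · obtain ⟨cg, hcg⟩ := hg.2.1; obtain ⟨ch, hch⟩ := hh.2.1
    exact ⟨cg + ch, (hcg.and hch).mono fun y hy => by show _ + _ = _; rw [hy.1, hy.2]⟩
  · rw [jump_add hg hh]
    exact (hg.2.2.union hh.2.2).subset (Function.support_add _ _)

lemma Phi1_add {g h : ℝ → ℝ} (hg : Tame g) (hh : Tame h) :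
    Phi1 (fun t => g t + h t) = Phi1 g + Phi1 h := by
  obtain ⟨cg, hcg⟩ := hg.2.1; obtain ⟨ch, hch⟩ := hh.2.1
  have hm : mlim (fun t => g t + h t) = cg + ch :=
    mlim_eq ((hcg.and hch).mono fun y hy => by show _ + _ = _; rw [hy.1, hy.2])
  rw [Phi1, Phi1, Phi1, jump_add hg hh, finsum_add_distrib hg.2.2 hh.2.2, hm,
    mlim_eq hcg, mlim_eq hch]
  ring

lemma jump_smul (c : ℝ) {g : ℝ → ℝ} (hg : Tame g) :
    jump (fun t => c * g t) = fun t => c * jump g t := by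
  funext t
  obtain ⟨cg, hcg⟩ := hg.1 t
  have : rlim (fun t => c * g t) t = c * cg :=
    rlim_eq (hcg.mono fun y hy => by show _ * _ = _; rw [hy])
  simp [jump, this, rlim_eq hcg]; ring

lemma Tame.smul (c : ℝ) {g : ℝ → ℝ} (hg : Tame g) : Tame (fun t => c * g t) := by
  refine ⟨fun t => ?_, ?_, ?_⟩
  · obtain ⟨cg, hcg⟩ := hg.1 t; exact ⟨c * cg, hcg.mono fun y hy => by show _ * _ = _; rw [hy]⟩
  · obtain ⟨cg, hcg⟩ := hg.2.1; exact ⟨c * cg, hcg.mono fun y hy => by show _ * _ = _; rw [hy]⟩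
  · rw [jump_smul c hg]
    exact hg.2.2.subset (by
      intro t ht
      simp only [Function.mem_support] at ht ⊢
      intro h0; exact ht (by rw [h0, mul_zero]))

lemma Phi1_smul (c : ℝ) {g : ℝ → ℝ} (hg : Tame g) : Phi1 (fun t => c * g t) = c * Phi1 g := by
  obtain ⟨cg, hcg⟩ := hg.2.1
  have hm : mlim (fun t => c * g t) = c * cg := mlim_eq (hcg.mono fun y hy => by show _ * _ = _; rw [hy])
  have hs : ∑ᶠ t, c * jump g t = c * ∑ᶠ t, jump g t := by
    simpa [smul_eq_mul] using (smul_finsum c (jump g)).symm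
  rw [Phi1, Phi1, jump_smul c hg, hm, mlim_eq hcg]
  simp only [hs]
  ring

lemma Phi1_sum {ι : Type*} (s : Finset ι) (f : ι → ℝ → ℝ) (hf : ∀ i ∈ s, Tame (f i)) :
    Tame (fun t => ∑ i ∈ s, f i t) ∧ Phi1 (fun t => ∑ i ∈ s, f i t) = ∑ i ∈ s, Phi1 (f i) := by
  classical
  induction s using Finset.induction_on with
  | empty => simpa using ⟨tame_zero, Phi1_zero⟩
  | @insert a s' hx ih =>
    have h1 : Tame (f a) := hf a (Finset.mem_insert_self a s')
    have h2 := ih (fun i hi => hf i (Finset.mem_insert_of_mem hi))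
    constructor
    · have := h1.add h2.1
      simpa [Finset.sum_insert hx] using this
    · have : Phi1 (fun t => f a t + ∑ i ∈ s', f i t) = Phi1 (f a) + Phi1 (fun t => ∑ i ∈ s', f i t) :=
        Phi1_add h1 h2.1
      simp only [Finset.sum_insert hx]
      rw [this, h2.2]



-- new stuff
lemma ind_of_mem {α : Type*} {S : Set α} {x : α} (h : x ∈ S) : ind S x = 1 :=
  Set.indicator_of_mem h 1

lemma ind_of_not_mem {α : Type*} {S : Set α} {x : α} (h : x ∉ S) : ind S x = 0 :=
  Set.indicator_of_notMem h 1

lemma rlim_ind_of_sub {S : Set ℝ} {t u : ℝ} (h : t < u) (hsub : Ioo t u ⊆ S) :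
    rlim (ind S) t = 1 :=
  rlim_eq (Eventually.mono (Ioo_mem_nhdsGT (h))
    (fun y hy => ind_of_mem (hsub hy)))

lemma rlim_ind_of_disj {S : Set ℝ} {t u : ℝ} (h : t < u) (hd : ∀ y ∈ Ioo t u, y ∉ S) :
    rlim (ind S) t = 0 :=
  rlim_eq (Eventually.mono (Ioo_mem_nhdsGT (h))
    (fun y hy => ind_of_not_mem (hd y hy)))

lemma hasR_ind_interval {S : Set ℝ} (hS : ∀ t : ℝ, ∃ u, t < u ∧ (Ioo t u ⊆ S ∨ ∀ y ∈ Ioo t u, y ∉ S)) :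
    ∀ t, ∃ c, ∀ᶠ y in nhdsWithin t (Set.Ioi t), ind S y = c := by
  intro t
  obtain ⟨u, hu, hc⟩ := hS t
  rcases hc with hc | hc
  · exact ⟨1, Eventually.mono (Ioo_mem_nhdsGT (hu)) fun y hy => ind_of_mem (hc hy)⟩
  · exact ⟨0, Eventually.mono (Ioo_mem_nhdsGT (hu)) fun y hy => ind_of_not_mem (hc y hy)⟩

lemma tame_phi_Icc {a b : ℝ} (hab : a ≤ b) : Tame (ind (Icc a b)) ∧ Phi1 (ind (Icc a b)) = 1 := by
  have hr : ∀ t, rlim (ind (Icc a b)) t = ind (Ico a b) t := by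
    intro t
    rcases lt_or_ge t a with h | h
    · rw [rlim_ind_of_disj h (fun y hy => by simp only [mem_Icc, not_and, not_le]; intro hya; linarith [hy.2]),
        ind_of_not_mem (by simp only [mem_Ico, not_and, not_lt]; intro hya; linarith)]
    · rcases lt_or_ge t b with h2 | h2
      · rw [rlim_ind_of_sub h2 (fun y hy => mem_Icc.2 ⟨by linarith [hy.1], le_of_lt hy.2⟩),
          ind_of_mem (mem_Ico.2 ⟨h, h2⟩)]
      · rw [rlim_ind_of_disj (lt_add_one t) (fun y hy => by
            simp only [mem_Icc, not_and, not_le]; intro _; linarith [hy.1]),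
          ind_of_not_mem (by simp only [mem_Ico, not_and, not_lt]; intro _; exact h2)]
  have hj : ∀ t, jump (ind (Icc a b)) t = if t = b then 1 else 0 := by
    intro t
    rw [jump, hr]
    rcases eq_or_ne t b with rfl | hne
    · rw [ind_of_mem (mem_Icc.2 ⟨hab, le_refl t⟩), ind_of_not_mem (by simp [mem_Ico])]
      simp
    · rw [if_neg hne]
      rcases lt_or_ge t a with h | h
      · rw [ind_of_not_mem (by simp [mem_Icc]; intro; linarith),
          ind_of_not_mem (by simp [mem_Ico]; intro; linarith)]; ring
      · rcases lt_or_ge t b with h2 | h2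
        · rw [ind_of_mem (mem_Icc.2 ⟨h, le_of_lt h2⟩), ind_of_mem (mem_Ico.2 ⟨h, h2⟩)]; ring
        · rw [ind_of_not_mem (by simp [mem_Icc]; intro; exact lt_of_le_of_ne h2 (Ne.symm hne)),
            ind_of_not_mem (by simp [mem_Ico]; intro; linarith)]; ring
  have hm : mlim (ind (Icc a b)) = 0 :=
    mlim_eq (eventually_atBot.2 ⟨a - 1, fun y hy => ind_of_not_mem (by simp [mem_Icc]; intro; linarith)⟩)
  have hsupp : Function.support (jump (ind (Icc a b))) ⊆ {b} := by
    intro t ht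
    simp only [Function.mem_support, hj] at ht
    by_contra hne
    simp only [mem_singleton_iff] at hne
    exact ht (if_neg hne)
  refine ⟨⟨hasR_ind_interval ?_, ⟨0, eventually_atBot.2 ⟨a - 1, fun y hy => ind_of_not_mem (by simp [mem_Icc]; intro; linarith)⟩⟩, (Set.finite_singleton b).subset hsupp⟩, ?_⟩
  · intro t
    rcases lt_or_ge t a with h | h
    · exact ⟨a, h, Or.inr fun y hy => by simp only [mem_Icc, not_and, not_le]; intro; linarith [hy.2]⟩
    · rcases lt_or_ge t b with h2 | h2
      · exact ⟨b, h2, Or.inl fun y hy => mem_Icc.2 ⟨by linarith [hy.1], le_of_lt hy.2⟩⟩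
      · exact ⟨t + 1, lt_add_one t, Or.inr fun y hy => by simp [mem_Icc]; intro; linarith [hy.1]⟩
  · rw [Phi1, hm, finsum_eq_single _ b (fun x hx => by rw [hj]; exact if_neg hx)]
    rw [hj, if_pos rfl]; ring

lemma tame_phi_Ici (a : ℝ) : Tame (ind (Ici a)) ∧ Phi1 (ind (Ici a)) = 0 := by
  have hj : ∀ t, jump (ind (Ici a)) t = 0 := by
    intro t
    rw [jump]
    rcases lt_or_ge t a with h | h
    · rw [rlim_ind_of_disj h (fun y hy => by simp only [mem_Ici, not_le]; linarith [hy.2]),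
        ind_of_not_mem (by simp only [mem_Ici, not_le]; linarith)]; ring
    · rw [rlim_ind_of_sub (lt_add_one t) (fun y hy => mem_Ici.2 (le_trans h (le_of_lt hy.1))),
        ind_of_mem (mem_Ici.2 h)]; ring
  have hm : mlim (ind (Ici a)) = 0 :=
    mlim_eq (eventually_atBot.2 ⟨a - 1, fun y hy => ind_of_not_mem (by simp [mem_Ici]; linarith)⟩)
  constructor
  · refine ⟨hasR_ind_interval ?_, ⟨0, eventually_atBot.2 ⟨a - 1, fun y hy => ind_of_not_mem (by simp [mem_Ici]; linarith)⟩⟩, ?_⟩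
    · intro t
      rcases lt_or_ge t a with h | h
      · exact ⟨a, h, Or.inr fun y hy => by simp only [mem_Ici, not_le]; linarith [hy.2]⟩
      · exact ⟨t + 1, lt_add_one t, Or.inl fun y hy => mem_Ici.2 (le_trans h (le_of_lt hy.1))⟩
    · have : Function.support (jump (ind (Ici a))) = ∅ := by
        ext t; simp [Function.mem_support, hj]
      rw [this]; exact Set.finite_empty
  · have : (fun t => jump (ind (Ici a)) t) = fun _ => (0:ℝ) := funext hj
    rw [Phi1, hm]
    rw [show (∑ᶠ t, jump (ind (Ici a)) t) = ∑ᶠ _ : ℝ, (0:ℝ) from by rw [← this]]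
    simp

lemma tame_phi_Iic (b : ℝ) : Tame (ind (Iic b)) ∧ Phi1 (ind (Iic b)) = 0 := by
  have hj : ∀ t, jump (ind (Iic b)) t = if t = b then 1 else 0 := by
    intro t
    rw [jump]
    rcases eq_or_ne t b with rfl | hne
    · rw [rlim_ind_of_disj (lt_add_one t) (fun y hy => by simp only [mem_Iic, not_le]; linarith [hy.1]),
        ind_of_mem (mem_Iic.2 (le_refl t))]; simp
    · rw [if_neg hne]
      rcases lt_or_ge t b with h | h
      · rw [rlim_ind_of_sub h (fun y hy => mem_Iic.2 (le_of_lt hy.2)), ind_of_mem (mem_Iic.2 (le_of_lt h))]; ring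
      · have hb : b < t := lt_of_le_of_ne h (Ne.symm hne)
        rw [rlim_ind_of_disj (lt_add_one t) (fun y hy => by simp only [mem_Iic, not_le]; linarith [hy.1]),
          ind_of_not_mem (by simp only [mem_Iic, not_le]; linarith)]; ring
  have hm : mlim (ind (Iic b)) = 1 :=
    mlim_eq (eventually_atBot.2 ⟨b, fun y hy => ind_of_mem (mem_Iic.2 hy)⟩)
  constructor
  · refine ⟨hasR_ind_interval ?_, ⟨1, eventually_atBot.2 ⟨b, fun y hy => ind_of_mem (mem_Iic.2 hy)⟩⟩, ?_⟩
    · intro t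
      rcases lt_or_ge t b with h | h
      · exact ⟨b, h, Or.inl fun y hy => mem_Iic.2 (le_of_lt hy.2)⟩
      · exact ⟨t + 1, lt_add_one t, Or.inr fun y hy => by simp only [mem_Iic, not_le]; linarith [hy.1]⟩
    · refine (Set.finite_singleton b).subset ?_
      intro t ht
      simp only [Function.mem_support, hj] at ht
      by_contra hne
      simp only [mem_singleton_iff] at hne
      exact ht (if_neg hne)
  · rw [Phi1, hm, finsum_eq_single _ b (fun x hx => by rw [hj]; exact if_neg hx), hj, if_pos rfl]
    ring

lemma tame_phi_univ : Tame (ind (univ : Set ℝ)) ∧ Phi1 (ind (univ : Set ℝ)) = -1 := by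
  have hj : ∀ t, jump (ind (univ : Set ℝ)) t = 0 := by
    intro t
    rw [jump, rlim_ind_of_sub (lt_add_one t) (fun y _ => mem_univ y), ind_of_mem (mem_univ t)]
    ring
  have hm : mlim (ind (univ : Set ℝ)) = 1 :=
    mlim_eq (Eventually.of_forall fun y => ind_of_mem (mem_univ y))
  constructor
  · refine ⟨hasR_ind_interval (fun t => ⟨t + 1, lt_add_one t, Or.inl fun y _ => mem_univ y⟩),
      ⟨1, Eventually.of_forall fun y => ind_of_mem (mem_univ y)⟩, ?_⟩
    have : Function.support (jump (ind (univ : Set ℝ))) = ∅ := by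
      ext t; simp [Function.mem_support, hj]
    rw [this]; exact Set.finite_empty
  · rw [Phi1, hm, show (∑ᶠ t, jump (ind (univ : Set ℝ)) t) = ∑ᶠ _ : ℝ, (0:ℝ) from by
      congr 1; exact funext hj]
    simp


def dot {n : ℕ} (y x : Fin n → ℝ) : ℝ := ∑ k, y k * x k

def PolyL {n : ℕ} (L : List ((Fin n → ℝ) × ℝ)) : Set (Fin n → ℝ) :=
  {x | ∀ p ∈ L, p.2 ≤ dot p.1 x}

lemma dot_snoc {n : ℕ} (y : Fin (n+1) → ℝ) (x : Fin n → ℝ) (t : ℝ) :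
    dot y (Fin.snoc x t) = dot (Fin.init y) x + y (Fin.last n) * t := by
  rw [dot, Fin.sum_univ_castSucc]
  simp only [Fin.snoc_castSucc, Fin.snoc_last]
  rfl

lemma dot_cons {n : ℕ} (y : Fin (n+1) → ℝ) (x : Fin n → ℝ) (t : ℝ) :
    dot y (Fin.cons t x) = y 0 * t + dot (Fin.tail y) x := by
  rw [dot, Fin.sum_univ_succ]
  simp only [Fin.cons_zero, Fin.cons_succ]
  rfl

def zr {n : ℕ} (p : (Fin n → ℝ) × ℝ) : (Fin n → ℝ) × ℝ := (p.1, 0)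

def fmRow {n : ℕ} (p q : (Fin (n+1) → ℝ) × ℝ) : (Fin n → ℝ) × ℝ :=
  (p.1 (Fin.last n) • Fin.init q.1 - q.1 (Fin.last n) • Fin.init p.1,
   p.1 (Fin.last n) * q.2 - q.1 (Fin.last n) * p.2)

def fm {n : ℕ} (L : List ((Fin (n+1) → ℝ) × ℝ)) : List ((Fin n → ℝ) × ℝ) :=
  ((L.filter (fun p => decide (p.1 (Fin.last n) = 0))).map (fun p => (Fin.init p.1, p.2))) ++
  (((L.filter (fun p => decide (0 < p.1 (Fin.last n)))).product
      (L.filter (fun p => decide (p.1 (Fin.last n) < 0)))).map (fun pq => fmRow pq.1 pq.2))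

lemma dot_smul {n : ℕ} (c : ℝ) (y x : Fin n → ℝ) : dot (c • y) x = c * dot y x := by
  rw [dot, dot, Finset.mul_sum]; congr 1; funext k; simp [mul_assoc]

lemma dot_sub_left {n : ℕ} (y z x : Fin n → ℝ) : dot (y - z) x = dot y x - dot z x := by
  rw [dot, dot, dot, ← Finset.sum_sub_distrib]; congr 1; funext k; simp [sub_mul]

-- helper: foldr max/min
lemma le_foldr_max (d : ℝ) (l : List ℝ) : ∀ x ∈ l, x ≤ l.foldr max d := by
  induction l with
  | nil => intro x hx; simp at hx
  | cons a l ih =>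
    intro x hx
    rcases List.mem_cons.1 hx with rfl | hx
    · exact le_max_left _ _
    · exact le_trans (ih x hx) (le_max_right _ _)

lemma foldr_max_le (d : ℝ) (l : List ℝ) (b : ℝ) (hd : d ≤ b) (h : ∀ x ∈ l, x ≤ b) :
    l.foldr max d ≤ b := by
  induction l with
  | nil => exact hd
  | cons a l ih =>
    exact max_le (h a (List.mem_cons_self)) (ih fun x hx => h x (List.mem_cons_of_mem a hx))

lemma foldr_min_le (d : ℝ) (l : List ℝ) : ∀ x ∈ l, l.foldr min d ≤ x := by
  induction l with
  | nil => intro x hx; simp at hx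
  | cons a l ih =>
    intro x hx
    rcases List.mem_cons.1 hx with rfl | hx
    · exact min_le_left _ _
    · exact le_trans (min_le_right _ _) (ih x hx)

lemma foldr_min_self (d : ℝ) (l : List ℝ) : l.foldr min d ≤ d := by
  induction l with
  | nil => exact le_refl d
  | cons a l ih => exact le_trans (min_le_right _ _) ih

lemma exists_between_lists (A B : List ℝ) (h : ∀ a ∈ A, ∀ b ∈ B, a ≤ b) :
    ∃ t : ℝ, (∀ a ∈ A, a ≤ t) ∧ (∀ b ∈ B, t ≤ b) := by
  cases A with
  | nil =>
    cases B with
    | nil => exact ⟨0, by simp, by simp⟩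
    | cons b B' =>
      refine ⟨(b :: B').foldr min b, by simp, ?_⟩
      exact foldr_min_le b (b :: B')
  | cons a A' =>
    refine ⟨(a :: A').foldr max a, le_foldr_max a (a :: A'), ?_⟩
    intro b hb
    exact foldr_max_le a (a :: A') b (h a (List.mem_cons_self) b hb)
      (fun x hx => h x hx b hb)

theorem mem_fm {n : ℕ} {L : List ((Fin (n+1) → ℝ) × ℝ)} {x : Fin n → ℝ} :
    x ∈ PolyL (fm L) ↔ ∃ t, Fin.snoc x t ∈ PolyL L := by
  constructor
  · intro hx
    -- lower/upper bound lists
    set Lpos := L.filter (fun p => decide (0 < p.1 (Fin.last n))) with hLpos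
    set Lneg := L.filter (fun p => decide (p.1 (Fin.last n) < 0)) with hLneg
    set A := Lpos.map (fun p => (p.2 - dot (Fin.init p.1) x) / p.1 (Fin.last n)) with hA
    set B := Lneg.map (fun p => (p.2 - dot (Fin.init p.1) x) / p.1 (Fin.last n)) with hB
    have hab : ∀ a ∈ A, ∀ b ∈ B, a ≤ b := by
      intro a ha b hb
      rw [hA] at ha; rw [hB] at hb
      obtain ⟨p, hp, rfl⟩ := List.mem_map.1 ha
      obtain ⟨q, hq, rfl⟩ := List.mem_map.1 hb
      have hpa : 0 < p.1 (Fin.last n) := by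
        have := (List.mem_filter.1 hp).2; simpa using this
      have hqa : q.1 (Fin.last n) < 0 := by
        have := (List.mem_filter.1 hq).2; simpa using this
      -- the combined row is in fm L
      have hrow : fmRow p q ∈ fm L := by
        rw [fm]
        refine List.mem_append_right _ (List.mem_map.2 ⟨(p, q), ?_, rfl⟩)
        exact List.mem_product.2 ⟨hp, hq⟩
      have := hx _ hrow
      rw [fmRow] at this
      simp only [dot_sub_left, dot_smul] at this
      -- this : ap * q.2 - aq * p.2 ≤ ap * dq - aq * dp
      rw [div_le_iff₀ hpa, div_mul_eq_mul_div, le_div_iff_of_neg hqa]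
      nlinarith [this]
    obtain ⟨t, htA, htB⟩ := exists_between_lists A B hab
    refine ⟨t, ?_⟩
    intro p hp
    rw [dot_snoc]
    rcases lt_trichotomy (p.1 (Fin.last n)) 0 with hneg | hzero | hpos
    · have hmem : (p.2 - dot (Fin.init p.1) x) / p.1 (Fin.last n) ∈ B := by
        rw [hB]
        exact List.mem_map.2 ⟨p, List.mem_filter.2 ⟨hp, by simpa using hneg⟩, rfl⟩
      have := htB _ hmem
      rw [le_div_iff_of_neg hneg] at this
      linarith
    · have hmem : (Fin.init p.1, p.2) ∈ fm L := by
        rw [fm]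
        exact List.mem_append_left _ (List.mem_map.2 ⟨p, List.mem_filter.2 ⟨hp, by simpa using hzero⟩, rfl⟩)
      have := hx _ hmem
      simp only at this
      rw [hzero]
      linarith
    · have hmem : (p.2 - dot (Fin.init p.1) x) / p.1 (Fin.last n) ∈ A := by
        rw [hA]
        exact List.mem_map.2 ⟨p, List.mem_filter.2 ⟨hp, by simpa using hpos⟩, rfl⟩
      have := htA _ hmem
      rw [div_le_iff₀ hpos] at this
      linarith
  · rintro ⟨t, ht⟩
    intro r hr
    rw [fm] at hr
    rcases List.mem_append.1 hr with h1 | h2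
    · obtain ⟨p, hp, rfl⟩ := List.mem_map.1 h1
      have hp0 : p.1 (Fin.last n) = 0 := by
        have := (List.mem_filter.1 hp).2; simpa using this
      have := ht p (List.mem_filter.1 hp).1
      rw [dot_snoc, hp0] at this
      simpa using this
    · obtain ⟨⟨p, q⟩, hpq, rfl⟩ := List.mem_map.1 h2
      obtain ⟨hp, hq⟩ := List.mem_product.1 hpq
      have hpa : 0 < p.1 (Fin.last n) := by
        have := (List.mem_filter.1 hp).2; simpa using this
      have hqa : q.1 (Fin.last n) < 0 := by
        have := (List.mem_filter.1 hq).2; simpa using this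
      have h1 := ht p (List.mem_filter.1 hp).1
      have h2' := ht q (List.mem_filter.1 hq).1
      rw [dot_snoc] at h1 h2'
      rw [fmRow]
      simp only [dot_sub_left, dot_smul]
      nlinarith [h1, h2', hpa, hqa]

def proj1 : {n : ℕ} → List ((Fin (n+1) → ℝ) × ℝ) → List ((Fin 1 → ℝ) × ℝ)
  | 0, L => L
  | _+1, L => proj1 (fm L)

theorem mem_proj1 {n : ℕ} {L : List ((Fin (n+1) → ℝ) × ℝ)} {t : ℝ} :
    (fun _ => t) ∈ PolyL (proj1 L) ↔ ∃ x ∈ PolyL L, x 0 = t := by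
  induction n with
  | zero =>
    constructor
    · intro h; exact ⟨fun _ => t, h, rfl⟩
    · rintro ⟨x, hx, rfl⟩
      have : x = fun _ => x 0 := by
        funext i
        have : i = 0 := Fin.fin_one_eq_zero i
        rw [this]
      rwa [← this]
  | succ m ih =>
    rw [show proj1 L = proj1 (fm L) from rfl, ih]
    constructor
    · rintro ⟨x, hx, hx0⟩
      obtain ⟨s, hs⟩ := mem_fm.1 hx
      refine ⟨Fin.snoc x s, hs, ?_⟩
      rw [show (0 : Fin (m+2)) = Fin.castSucc 0 from rfl, Fin.snoc_castSucc]
      exact hx0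
    · rintro ⟨X, hX, hX0⟩
      refine ⟨Fin.init X, mem_fm.2 ⟨X (Fin.last (m+1)), ?_⟩, ?_⟩
      · rwa [Fin.snoc_init_self]
      · rw [show Fin.init X 0 = X (Fin.castSucc 0) from rfl]
        exact hX0

def sliceL {n : ℕ} (L : List ((Fin (n+1) → ℝ) × ℝ)) (t : ℝ) : List ((Fin n → ℝ) × ℝ) :=
  L.map (fun p => (Fin.tail p.1, p.2 - p.1 0 * t))

lemma mem_sliceL {n : ℕ} {L : List ((Fin (n+1) → ℝ) × ℝ)} {t : ℝ} {x : Fin n → ℝ} :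
    x ∈ PolyL (sliceL L t) ↔ Fin.cons t x ∈ PolyL L := by
  constructor
  · intro h p hp
    have := h _ (List.mem_map.2 ⟨p, hp, rfl⟩)
    simp only at this
    rw [dot_cons]
    linarith
  · intro h r hr
    obtain ⟨p, hp, rfl⟩ := List.mem_map.1 hr
    have := h p hp
    rw [dot_cons] at this
    simp only
    linarith

lemma mem_zr_sliceL {n : ℕ} {L : List ((Fin (n+1) → ℝ) × ℝ)} {t : ℝ} {v : Fin n → ℝ} :
    v ∈ PolyL ((sliceL L t).map zr) ↔ Fin.cons 0 v ∈ PolyL (L.map zr) := by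
  constructor
  · intro h p hp
    obtain ⟨q, hq, rfl⟩ := List.mem_map.1 hp
    have := h (zr (Fin.tail q.1, q.2 - q.1 0 * t)) (List.mem_map.2 ⟨_, List.mem_map.2 ⟨q, hq, rfl⟩, rfl⟩)
    simp only [zr, dot_cons] at this ⊢
    linarith
  · intro h r hr
    obtain ⟨p, hp, rfl⟩ := List.mem_map.1 hr
    obtain ⟨q, hq, rfl⟩ := List.mem_map.1 hp
    have := h (zr q) (List.mem_map.2 ⟨q, hq, rfl⟩)
    simp only [zr, dot_cons] at this ⊢
    linarith

-- commutation of fm with zeroing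
lemma product_map {α β γ δ : Type*} (f : α → γ) (g : β → δ) (l₁ : List α) (l₂ : List β) :
    (l₁.map f).product (l₂.map g) = (l₁.product l₂).map (Prod.map f g) := by
  induction l₁ with
  | nil => simp [List.product]
  | cons a l ih =>
    simp only [List.product, List.map_map, List.flatMap_cons, List.map_cons, List.map_append] at ih ⊢
    rw [ih]
    congr 1

lemma fm_zr {n : ℕ} (L : List ((Fin (n+1) → ℝ) × ℝ)) :
    fm (L.map zr) = (fm L).map zr := by
  have hfilter : ∀ (P : (Fin (n+1) → ℝ) → Prop) [DecidablePred P],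
      (L.map zr).filter (fun p => decide (P p.1)) = (L.filter (fun p => decide (P p.1))).map zr := by
    intro P _
    rw [List.filter_map]
    congr 1
  rw [fm, fm]
  rw [hfilter (fun y => y (Fin.last n) = 0), hfilter (fun y => 0 < y (Fin.last n)),
    hfilter (fun y => y (Fin.last n) < 0)]
  rw [List.map_append, List.map_map, List.map_map, product_map, List.map_map, List.map_map]
  congr 1
  · refine List.map_congr_left fun pq _ => ?_
    show fmRow (zr pq.1) (zr pq.2) = zr (fmRow pq.1 pq.2)
    refine Prod.ext rfl ?_
    show pq.1.1 (Fin.last n) * 0 - pq.2.1 (Fin.last n) * 0 = 0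
    ring


def epsSet {E : Type*} [AddCommGroup E] [Module ℝ E] (K : Set E) : ℝ :=
  if K = -K then (-1 : ℝ)^(Module.finrank ℝ (Submodule.span ℝ K)) else 0

def conL (n : ℕ) : (Fin n → ℝ) →ₗ[ℝ] (Fin (n+1) → ℝ) where
  toFun v := Fin.cons 0 v
  map_add' v w := by
    funext i
    refine Fin.cases ?_ ?_ i <;> simp
  map_smul' c v := by
    funext i
    refine Fin.cases ?_ ?_ i <;> simp

lemma conL_inj (n : ℕ) : Function.Injective (conL n) := by
  intro v w h
  have := congrArg Fin.tail h
  simpa [conL, Fin.tail_cons] using this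

lemma coneStep {n : ℕ} (K : Set (Fin (n+1) → ℝ))
    (h0 : (0 : Fin (n+1) → ℝ) ∈ K)
    (hadd : ∀ v ∈ K, ∀ w ∈ K, v + w ∈ K)
    (hsmul : ∀ c : ℝ, 0 ≤ c → ∀ v ∈ K, c • v ∈ K) :
    epsSet K = epsSet {v : Fin n → ℝ | Fin.cons 0 v ∈ K} *
      (1 - ((if ∃ k ∈ K, 0 < k 0 then (1:ℝ) else 0) +
            (if ∃ k ∈ K, k 0 < 0 then (1:ℝ) else 0))) := by
  set R : Set (Fin n → ℝ) := {v : Fin n → ℝ | Fin.cons 0 v ∈ K} with hR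
  have hcons0 : ∀ v : Fin n → ℝ, Fin.cons (0:ℝ) v = conL n v := fun v => rfl
  have hmemR : ∀ v : Fin n → ℝ, v ∈ R ↔ conL n v ∈ K := fun v => Iff.rfl
  have hKdecomp : ∀ w ∈ K, w 0 = 0 → w = conL n (Fin.tail w) := by
    intro w _ hw0
    have : Fin.cons (w 0) (Fin.tail w) = w := Fin.cons_self_tail w
    rw [← this, hw0]
    rfl
  -- symmetry of K transfers to R
  have hnegK : K = -K → ∀ w ∈ K, -w ∈ K := by
    intro hs w hw
    rw [hs]
    exact Set.mem_neg.2 (by simpa using hw)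
  have hsymR : K = -K → R = -R := by
    intro hsym
    ext v
    rw [Set.mem_neg, hmemR, hmemR, map_neg]
    constructor
    · intro h; exact hnegK hsym _ h
    · intro h
      have := hnegK hsym _ h
      simpa using this
  by_cases hsym : K = -K
  · -- K is a submodule
    have hsmul' : ∀ (c : ℝ) {x : Fin (n+1) → ℝ}, x ∈ K → c • x ∈ K := by
      intro c x hx
      rcases le_or_gt 0 c with hc | hc
      · exact hsmul c hc x hx
      · have hnx : -x ∈ K := hnegK hsym x hx
        have : c • x = (-c) • (-x) := by rw [neg_smul_neg]
        rw [this]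
        exact hsmul (-c) (by linarith) _ hnx
    set KS : Submodule ℝ (Fin (n+1) → ℝ) :=
      { carrier := K
        add_mem' := fun ha hb => hadd _ ha _ hb
        zero_mem' := h0
        smul_mem' := fun c _ hx => hsmul' c hx } with hKS
    have hspanK : Submodule.span ℝ K = KS := by
      conv_lhs => rw [show K = ↑KS from rfl]
      exact Submodule.span_eq KS
    have hRsym : R = -R := hsymR hsym
    have hRadd : ∀ v ∈ R, ∀ w ∈ R, v + w ∈ R := by
      intro v hv w hw
      rw [hmemR, map_add]
      exact hadd _ ((hmemR v).1 hv) _ ((hmemR w).1 hw)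
    have hR0 : (0 : Fin n → ℝ) ∈ R := by rw [hmemR, map_zero]; exact h0
    have hRsmul : ∀ (c : ℝ) {x : Fin n → ℝ}, x ∈ R → c • x ∈ R := by
      intro c x hx
      rw [hmemR, map_smul]
      exact hsmul' c ((hmemR x).1 hx)
    set RS : Submodule ℝ (Fin n → ℝ) :=
      { carrier := R
        add_mem' := fun ha hb => hRadd _ ha _ hb
        zero_mem' := hR0
        smul_mem' := fun c _ hx => hRsmul c hx } with hRS
    have hspanR : Submodule.span ℝ R = RS := by
      conv_lhs => rw [show R = ↑RS from rfl]
      exact Submodule.span_eq RS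
    by_cases hz : ∀ k ∈ K, k 0 = 0
    · have hup : ¬ ∃ k ∈ K, 0 < k 0 := by
        rintro ⟨k, hk, hk0⟩; rw [hz k hk] at hk0; exact lt_irrefl 0 hk0
      have hdn : ¬ ∃ k ∈ K, k 0 < 0 := by
        rintro ⟨k, hk, hk0⟩; rw [hz k hk] at hk0; exact lt_irrefl 0 hk0
      rw [if_neg hup, if_neg hdn]
      have hKR : K = (conL n) '' R := by
        ext w
        constructor
        · intro hw
          exact ⟨Fin.tail w, by rw [hmemR, ← hKdecomp w hw (hz w hw)]; exact hw,
            (hKdecomp w hw (hz w hw)).symm⟩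
        · rintro ⟨v, hv, rfl⟩
          exact (hmemR v).1 hv
      have hrank : Module.finrank ℝ (Submodule.span ℝ K) = Module.finrank ℝ (Submodule.span ℝ R) := by
        rw [hKR, Submodule.span_image]
        exact (LinearEquiv.finrank_eq (Submodule.equivMapOfInjective _ (conL_inj n) _)).symm
      rw [epsSet, epsSet, if_pos hsym, if_pos hRsym, hrank]
      ring
    · push_neg at hz
      obtain ⟨k, hk, hk0⟩ := hz
      have hup : ∃ k ∈ K, 0 < k 0 := by
        rcases lt_or_gt_of_ne hk0 with h | h
        · exact ⟨-k, hnegK hsym k hk, by simpa using h⟩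
        · exact ⟨k, hk, h⟩
      have hdn : ∃ k ∈ K, k 0 < 0 := by
        rcases lt_or_gt_of_ne hk0 with h | h
        · exact ⟨k, hk, h⟩
        · exact ⟨-k, hnegK hsym k hk, by simpa using h⟩
      rw [if_pos hup, if_pos hdn]
      -- rank computation : rank K = rank R + 1
      set ell : (Fin (n+1) → ℝ) →ₗ[ℝ] ℝ := LinearMap.proj 0 with hell
      set ellS : KS →ₗ[ℝ] ℝ := ell.comp KS.subtype with hellS
      obtain ⟨kp, hkp, hkp0⟩ := hup
      have hrange : LinearMap.range ellS = ⊤ := by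
        rw [eq_top_iff]
        intro r _
        refine ⟨(r / kp 0) • ⟨kp, hkp⟩, ?_⟩
        show ell ((r / kp 0) • kp) = r
        have : ell kp = kp 0 := rfl
        rw [map_smul, this, smul_eq_mul]
        field_simp
      have hkerc : Submodule.map KS.subtype (LinearMap.ker ellS) = KS ⊓ LinearMap.ker ell := by
        rw [hellS, LinearMap.ker_comp, Submodule.map_comap_subtype]
      have hmapR : Submodule.map (conL n) RS = KS ⊓ LinearMap.ker ell := by
        ext w
        simp only [Submodule.mem_map, Submodule.mem_inf, LinearMap.mem_ker]
        constructor
        · rintro ⟨v, hv, rfl⟩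
          refine ⟨(hmemR v).1 hv, ?_⟩
          show (conL n v) 0 = 0
          simp [conL]
        · rintro ⟨hw, hw0⟩
          have hw0' : w 0 = 0 := hw0
          exact ⟨Fin.tail w, by
            show Fin.tail w ∈ R
            rw [hmemR, ← hKdecomp w hw hw0']; exact hw, (hKdecomp w hw hw0').symm⟩
      have e1 : Module.finrank ℝ RS = Module.finrank ℝ (KS ⊓ LinearMap.ker ell : Submodule ℝ _) := by
        rw [← hmapR]
        exact LinearEquiv.finrank_eq (Submodule.equivMapOfInjective _ (conL_inj n) _)
      have e2 : Module.finrank ℝ (KS ⊓ LinearMap.ker ell : Submodule ℝ _) =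
          Module.finrank ℝ (LinearMap.ker ellS) := by
        rw [← hkerc]
        exact (LinearEquiv.finrank_eq (Submodule.equivMapOfInjective _
          (Submodule.injective_subtype KS) _)).symm
      have e3 : Module.finrank ℝ (LinearMap.range ellS) + Module.finrank ℝ (LinearMap.ker ellS) =
          Module.finrank ℝ KS := LinearMap.finrank_range_add_finrank_ker ellS
      have e4 : Module.finrank ℝ (LinearMap.range ellS) = 1 := by
        rw [hrange, finrank_top, Module.finrank_self]
      have hrank : Module.finrank ℝ (Submodule.span ℝ K) =
          Module.finrank ℝ (Submodule.span ℝ R) + 1 := by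
        rw [hspanK, hspanR, e1, e2, ← e3, e4]
        ring
      rw [epsSet, epsSet, if_pos hsym, if_pos hRsym, hrank, pow_succ]
      ring
  · -- K not symmetric : epsSet K = 0
    rw [epsSet, if_neg hsym]
    by_cases hRsym : R = -R
    · -- exactly one of up/dn holds
      have hone : ∀ w ∈ K, w 0 = 0 → -w ∈ K := by
        intro w hw hw0
        have htailv : Fin.tail w ∈ R := by
          rw [hmemR, ← hKdecomp w hw hw0]; exact hw
        have : -Fin.tail w ∈ R := by rw [hRsym, Set.mem_neg]; simpa using htailv
        have h2 : conL n (-Fin.tail w) ∈ K := (hmemR _).1 this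
        rw [map_neg] at h2
        rw [hKdecomp w hw hw0]
        exact h2
      by_cases hup : ∃ k ∈ K, 0 < k 0
      · by_cases hdn : ∃ k ∈ K, k 0 < 0
        · -- K would be symmetric, contradiction
          exfalso
          apply hsym
          obtain ⟨kp, hkp, hkp0⟩ := hup
          obtain ⟨km, hkm, hkm0⟩ := hdn
          have hneg : ∀ w ∈ K, -w ∈ K := by
            intro w hw
            rcases lt_trichotomy (w 0) 0 with h | h | h
            · -- use kp
              set c := (-(w 0)) / kp 0 with hc
              have hc0 : 0 ≤ c := by
                apply div_nonneg <;> linarith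
              have hm : w + c • kp ∈ K := hadd _ hw _ (hsmul c hc0 _ hkp)
              have hm0 : (w + c • kp) 0 = 0 := by
                show w 0 + c * kp 0 = 0
                have hne : kp 0 ≠ 0 := ne_of_gt hkp0
                have : c * kp 0 = -(w 0) := by
                  rw [hc, neg_div, neg_mul, div_mul_cancel₀ _ hne]
                linarith
              have := hone _ hm hm0
              have h2 : -(w + c • kp) + c • kp ∈ K := hadd _ this _ (hsmul c hc0 _ hkp)
              have h3 : -(w + c • kp) + c • kp = -w := by abel
              rwa [h3] at h2
            · have := hone w hw h
              exact this
            · -- use km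
              set c := (w 0) / (-(km 0)) with hc
              have hc0 : 0 ≤ c := by
                apply div_nonneg <;> linarith
              have hm : w + c • km ∈ K := hadd _ hw _ (hsmul c hc0 _ hkm)
              have hm0 : (w + c • km) 0 = 0 := by
                show w 0 + c * km 0 = 0
                have hne : km 0 ≠ 0 := ne_of_lt hkm0
                have : c * km 0 = -(w 0) := by
                  rw [hc, div_neg, neg_mul, div_mul_cancel₀ _ hne]
                linarith
              have := hone _ hm hm0
              have h2 : -(w + c • km) + c • km ∈ K := hadd _ this _ (hsmul c hc0 _ hkm)
              have h3 : -(w + c • km) + c • km = -w := by abel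
              rwa [h3] at h2
          ext w
          rw [Set.mem_neg]
          constructor
          · intro hw; exact hneg w hw
          · intro hw; have := hneg _ hw; simpa using this
        · rw [if_pos hup, if_neg hdn]; ring
      · by_cases hdn : ∃ k ∈ K, k 0 < 0
        · rw [if_neg hup, if_pos hdn]; ring
        · -- all k 0 = 0, so K = conL '' R which is symmetric : contradiction
          exfalso
          apply hsym
          have hz : ∀ k ∈ K, k 0 = 0 := by
            intro k hk
            by_contra h
            rcases lt_or_gt_of_ne h with h' | h'
            · exact hdn ⟨k, hk, h'⟩
            · exact hup ⟨k, hk, h'⟩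
          have hneg : ∀ w ∈ K, -w ∈ K := by
            intro w hw
            have htailv : Fin.tail w ∈ R := by
              rw [hmemR, ← hKdecomp w hw (hz w hw)]; exact hw
            have : -Fin.tail w ∈ R := by rw [hRsym, Set.mem_neg]; simpa using htailv
            have h2 : conL n (-Fin.tail w) ∈ K := (hmemR _).1 this
            rw [map_neg] at h2
            rw [hKdecomp w hw (hz w hw)]
            exact h2
          ext w
          rw [Set.mem_neg]
          constructor
          · intro hw; exact hneg w hw
          · intro hw; have := hneg _ hw; simpa using this
    · rw [epsSet, if_neg hRsym]
      ring


-- === Section E : J interval classification ===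

lemma dot_add_right {n : ℕ} (y x x' : Fin n → ℝ) : dot y (x + x') = dot y x + dot y x' := by
  rw [dot, dot, dot, ← Finset.sum_add_distrib]; congr 1; funext k; simp [mul_add]

lemma dot_smul_right {n : ℕ} (y : Fin n → ℝ) (c : ℝ) (x : Fin n → ℝ) :
    dot y (c • x) = c * dot y x := by
  rw [dot, dot, Finset.mul_sum]; congr 1; funext k; simp; ring

lemma dot_zero_right {n : ℕ} (y : Fin n → ℝ) : dot y 0 = 0 := by
  rw [dot]; simp

lemma proj1_zr : ∀ {n : ℕ} (L : List ((Fin (n+1) → ℝ) × ℝ)),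
    proj1 (L.map zr) = (proj1 L).map zr
  | 0, L => rfl
  | (m+1), L => by
      show proj1 (fm (L.map zr)) = (proj1 (fm L)).map zr
      rw [fm_zr]
      exact proj1_zr (fm L)

def Jset {n : ℕ} (L : List ((Fin (n+1) → ℝ) × ℝ)) : Set ℝ :=
  {t | ∀ p ∈ proj1 L, p.2 ≤ p.1 0 * t}

lemma dot_one1 (y x : Fin 1 → ℝ) : dot y x = y 0 * x 0 := by
  rw [dot, Fin.sum_univ_one]

lemma mem_Jset {n : ℕ} {L : List ((Fin (n+1) → ℝ) × ℝ)} {t : ℝ} :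
    t ∈ Jset L ↔ ∃ x ∈ PolyL L, x 0 = t := by
  rw [← mem_proj1]
  constructor
  · intro h p hp
    rw [dot_one1]
    exact h p hp
  · intro h p hp
    have := h p hp
    rwa [dot_one1] at this

lemma mem_K_iff {n : ℕ} {L : List ((Fin n → ℝ) × ℝ)} {v : Fin n → ℝ} :
    v ∈ PolyL (L.map zr) ↔ ∀ p ∈ L, 0 ≤ dot p.1 v := by
  constructor
  · intro h p hp
    have := h (zr p) (List.mem_map.2 ⟨p, hp, rfl⟩)
    simpa [zr] using this
  · intro h r hr
    obtain ⟨p, hp, rfl⟩ := List.mem_map.1 hr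
    simpa [zr] using h p hp

lemma K_zero_mem {n : ℕ} (L : List ((Fin n → ℝ) × ℝ)) : (0 : Fin n → ℝ) ∈ PolyL (L.map zr) :=
  mem_K_iff.2 fun p _ => le_of_eq (dot_zero_right p.1).symm

lemma K_add_mem {n : ℕ} {L : List ((Fin n → ℝ) × ℝ)} :
    ∀ v ∈ PolyL (L.map zr), ∀ w ∈ PolyL (L.map zr), v + w ∈ PolyL (L.map zr) := by
  intro v hv w hw
  rw [mem_K_iff] at hv hw ⊢
  intro p hp
  rw [dot_add_right]
  linarith [hv p hp, hw p hp]

lemma K_smul_mem {n : ℕ} {L : List ((Fin n → ℝ) × ℝ)} :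
    ∀ c : ℝ, 0 ≤ c → ∀ v ∈ PolyL (L.map zr), c • v ∈ PolyL (L.map zr) := by
  intro c hc v hv
  rw [mem_K_iff] at hv ⊢
  intro p hp
  rw [dot_smul_right]
  exact mul_nonneg hc (hv p hp)

lemma Jset_nonempty {n : ℕ} {L : List ((Fin (n+1) → ℝ) × ℝ)} (hne : (PolyL L).Nonempty) :
    (Jset L).Nonempty := by
  obtain ⟨x, hx⟩ := hne
  exact ⟨x 0, mem_Jset.2 ⟨x, hx, rfl⟩⟩

lemma Jset_closed {n : ℕ} (L : List ((Fin (n+1) → ℝ) × ℝ)) : IsClosed (Jset L) := by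
  have : Jset L = ⋂ (p : {q // q ∈ proj1 L}), {t : ℝ | p.1.2 ≤ p.1.1 0 * t} := by
    ext t
    simp only [Jset, Set.mem_iInter, Set.mem_setOf_eq, Subtype.forall]
  rw [this]
  exact isClosed_iInter fun p => isClosed_le continuous_const (continuous_const.mul continuous_id)

lemma Jset_ord {n : ℕ} {L : List ((Fin (n+1) → ℝ) × ℝ)} :
    ∀ t₁ ∈ Jset L, ∀ t₂ ∈ Jset L, ∀ t, t₁ ≤ t → t ≤ t₂ → t ∈ Jset L := by
  intro t₁ h₁ t₂ h₂ t ha hb p hp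
  rcases le_or_gt 0 (p.1 0) with hy | hy
  · have := h₁ p hp; nlinarith
  · have := h₂ p hp; nlinarith

lemma unbddAbove_of_up {n : ℕ} {L : List ((Fin (n+1) → ℝ) × ℝ)} (hne : (PolyL L).Nonempty)
    (hk : ∃ k ∈ PolyL (L.map zr), 0 < k 0) : ¬ BddAbove (Jset L) := by
  obtain ⟨x, hx⟩ := hne
  obtain ⟨k, hkK, hk0⟩ := hk
  rintro ⟨b, hb⟩
  set c := max 0 ((b + 1 - x 0) / k 0) with hc
  have hc0 : (0:ℝ) ≤ c := le_max_left _ _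
  have hmem : x + c • k ∈ PolyL L := by
    intro p hp
    have h1 := hx p hp
    have h2 : 0 ≤ dot p.1 k := mem_K_iff.1 hkK p hp
    rw [dot_add_right, dot_smul_right]
    nlinarith
  have hJ : (x + c • k) 0 ∈ Jset L := mem_Jset.2 ⟨_, hmem, rfl⟩
  have hval : (x + c • k) 0 = x 0 + c * k 0 := rfl
  have hcge : (b + 1 - x 0) / k 0 ≤ c := le_max_right _ _
  rw [div_le_iff₀ hk0] at hcge
  have hble := hb hJ
  rw [hval] at hble
  nlinarith

lemma bddAbove_of_not_up {n : ℕ} {L : List ((Fin (n+1) → ℝ) × ℝ)}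
    (h : ¬ ∃ k ∈ PolyL (L.map zr), 0 < k 0) : BddAbove (Jset L) := by
  by_cases hall : ∀ p ∈ proj1 L, 0 ≤ p.1 0
  · exfalso
    apply h
    have h1 : (fun _ : Fin 1 => (1:ℝ)) ∈ PolyL ((proj1 L).map zr) := by
      rw [mem_K_iff]
      intro p hp
      rw [dot_one1, mul_one]
      exact hall p hp
    rw [← proj1_zr] at h1
    obtain ⟨x, hxK, hx0⟩ := mem_proj1.1 h1
    exact ⟨x, hxK, by rw [hx0]; norm_num⟩
  · push_neg at hall
    obtain ⟨p, hp, hp0⟩ := hall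
    refine ⟨p.2 / p.1 0, fun t ht => ?_⟩
    have := ht p hp
    rw [le_div_iff_of_neg hp0]
    linarith [this]

lemma unbddBelow_of_dn {n : ℕ} {L : List ((Fin (n+1) → ℝ) × ℝ)} (hne : (PolyL L).Nonempty)
    (hk : ∃ k ∈ PolyL (L.map zr), k 0 < 0) : ¬ BddBelow (Jset L) := by
  obtain ⟨x, hx⟩ := hne
  obtain ⟨k, hkK, hk0⟩ := hk
  rintro ⟨b, hb⟩
  set c := max 0 ((b - 1 - x 0) / k 0) with hc
  have hc0 : (0:ℝ) ≤ c := le_max_left _ _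
  have hmem : x + c • k ∈ PolyL L := by
    intro p hp
    have h1 := hx p hp
    have h2 : 0 ≤ dot p.1 k := mem_K_iff.1 hkK p hp
    rw [dot_add_right, dot_smul_right]
    nlinarith
  have hJ : (x + c • k) 0 ∈ Jset L := mem_Jset.2 ⟨_, hmem, rfl⟩
  have hval : (x + c • k) 0 = x 0 + c * k 0 := rfl
  have hcge : (b - 1 - x 0) / k 0 ≤ c := le_max_right _ _
  rw [div_le_iff_of_neg hk0] at hcge
  have hble := hb hJ
  rw [hval] at hble
  nlinarith

lemma bddBelow_of_not_dn {n : ℕ} {L : List ((Fin (n+1) → ℝ) × ℝ)}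
    (h : ¬ ∃ k ∈ PolyL (L.map zr), k 0 < 0) : BddBelow (Jset L) := by
  by_cases hall : ∀ p ∈ proj1 L, p.1 0 ≤ 0
  · exfalso
    apply h
    have h1 : (fun _ : Fin 1 => (-1:ℝ)) ∈ PolyL ((proj1 L).map zr) := by
      rw [mem_K_iff]
      intro p hp
      rw [dot_one1]
      nlinarith [hall p hp]
    rw [← proj1_zr] at h1
    obtain ⟨x, hxK, hx0⟩ := mem_proj1.1 h1
    exact ⟨x, hxK, by rw [hx0]; norm_num⟩
  · push_neg at hall
    obtain ⟨p, hp, hp0⟩ := hall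
    refine ⟨p.2 / p.1 0, fun t ht => ?_⟩
    have := ht p hp
    rw [div_le_iff₀ hp0]
    linarith [this]

-- === Section F : interval shapes, phiJ, Phi, main lemma B ===

section IntervalShape

variable {S : Set ℝ}

lemma set_eq_Icc (hne : S.Nonempty) (hcl : IsClosed S)
    (hord : ∀ t₁ ∈ S, ∀ t₂ ∈ S, ∀ t, t₁ ≤ t → t ≤ t₂ → t ∈ S)
    (bb : BddBelow S) (ba : BddAbove S) : S = Icc (sInf S) (sSup S) := by
  ext t
  constructor
  · intro ht; exact ⟨csInf_le bb ht, le_csSup ba ht⟩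
  · rintro ⟨h1, h2⟩
    exact hord _ (hcl.csInf_mem hne bb) _ (hcl.csSup_mem hne ba) t h1 h2

lemma set_eq_Ici (hne : S.Nonempty) (hcl : IsClosed S)
    (hord : ∀ t₁ ∈ S, ∀ t₂ ∈ S, ∀ t, t₁ ≤ t → t ≤ t₂ → t ∈ S)
    (bb : BddBelow S) (ba : ¬ BddAbove S) : S = Ici (sInf S) := by
  ext t
  constructor
  · intro ht; exact csInf_le bb ht
  · intro ht
    obtain ⟨u, hu, htu⟩ := not_bddAbove_iff'.1 ba t
    exact hord _ (hcl.csInf_mem hne bb) _ hu t ht (le_of_not_ge htu)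

lemma set_eq_Iic (hne : S.Nonempty) (hcl : IsClosed S)
    (hord : ∀ t₁ ∈ S, ∀ t₂ ∈ S, ∀ t, t₁ ≤ t → t ≤ t₂ → t ∈ S)
    (bb : ¬ BddBelow S) (ba : BddAbove S) : S = Iic (sSup S) := by
  ext t
  constructor
  · intro ht; exact le_csSup ba ht
  · intro ht
    obtain ⟨u, hu, htu⟩ := not_bddBelow_iff'.1 bb t
    exact hord _ hu _ (hcl.csSup_mem hne ba) t (le_of_not_ge htu) ht

lemma set_eq_univ (hord : ∀ t₁ ∈ S, ∀ t₂ ∈ S, ∀ t, t₁ ≤ t → t ≤ t₂ → t ∈ S)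
    (bb : ¬ BddBelow S) (ba : ¬ BddAbove S) : S = univ := by
  ext t
  simp only [mem_univ, iff_true]
  obtain ⟨u, hu, htu⟩ := not_bddAbove_iff'.1 ba t
  obtain ⟨l, hl, htl⟩ := not_bddBelow_iff'.1 bb t
  exact hord _ hl _ hu t (le_of_not_ge htl) (le_of_not_ge htu)

end IntervalShape

lemma phiJ {n : ℕ} (L : List ((Fin (n+1) → ℝ) × ℝ)) (hne : (PolyL L).Nonempty) :
    Tame (ind (Jset L)) ∧ Phi1 (ind (Jset L)) =
      1 - ((if ∃ k ∈ PolyL (L.map zr), 0 < k 0 then (1:ℝ) else 0) +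
           (if ∃ k ∈ PolyL (L.map zr), k 0 < 0 then (1:ℝ) else 0)) := by
  have hJne := Jset_nonempty hne
  have hcl := Jset_closed L
  have hord := @Jset_ord n L
  by_cases hup : ∃ k ∈ PolyL (L.map zr), 0 < k 0
  · by_cases hdn : ∃ k ∈ PolyL (L.map zr), k 0 < 0
    · have hJ : Jset L = univ :=
        set_eq_univ hord (unbddBelow_of_dn hne hdn) (unbddAbove_of_up hne hup)
      rw [hJ, if_pos hup, if_pos hdn]
      exact ⟨tame_phi_univ.1, by rw [tame_phi_univ.2]; ring⟩
    · have hJ : Jset L = Ici (sInf (Jset L)) :=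
        set_eq_Ici hJne hcl hord (bddBelow_of_not_dn hdn) (unbddAbove_of_up hne hup)
      rw [hJ, if_pos hup, if_neg hdn]
      exact ⟨(tame_phi_Ici _).1, by rw [(tame_phi_Ici _).2]; ring⟩
  · by_cases hdn : ∃ k ∈ PolyL (L.map zr), k 0 < 0
    · have hJ : Jset L = Iic (sSup (Jset L)) :=
        set_eq_Iic hJne hcl hord (unbddBelow_of_dn hne hdn) (bddAbove_of_not_up hup)
      rw [hJ, if_neg hup, if_pos hdn]
      exact ⟨(tame_phi_Iic _).1, by rw [(tame_phi_Iic _).2]; ring⟩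
    · have bb := bddBelow_of_not_dn hdn
      have ba := bddAbove_of_not_up hup
      have hJ : Jset L = Icc (sInf (Jset L)) (sSup (Jset L)) := set_eq_Icc hJne hcl hord bb ba
      have hle : sInf (Jset L) ≤ sSup (Jset L) := by
        obtain ⟨t, ht⟩ := hJne
        exact le_trans (csInf_le bb ht) (le_csSup ba ht)
      rw [hJ, if_neg hup, if_neg hdn]
      exact ⟨(tame_phi_Icc hle).1, by rw [(tame_phi_Icc hle).2]; ring⟩

lemma ind_congr {α β : Type*} {S : Set α} {T : Set β} {x : α} {y : β}
    (h : x ∈ S ↔ y ∈ T) : ind S x = ind T y := by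
  by_cases hx : x ∈ S
  · rw [ind_of_mem hx, ind_of_mem (h.1 hx)]
  · rw [ind_of_not_mem hx, ind_of_not_mem (fun hy => hx (h.2 hy))]

def Phi : (n : ℕ) → ((Fin n → ℝ) → ℝ) → ℝ
  | 0, f => f (fun i => i.elim0)
  | (n+1), f => Phi1 (fun t => Phi n (fun x => f (Fin.cons t x)))

lemma Phi_zero : ∀ n : ℕ, Phi n (fun _ => (0:ℝ)) = 0
  | 0 => rfl
  | (n+1) => by
      show Phi1 (fun _ => Phi n (fun _ => (0:ℝ))) = 0
      have h1 : (fun _ : ℝ => Phi n (fun _ => (0:ℝ))) = fun _ : ℝ => (0:ℝ) := by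
        funext t; exact Phi_zero n
      rw [h1]
      exact Phi1_zero

theorem lemB (n : ℕ) :
    ∀ {ι : Type*} (s : Finset ι) (a : ι → ℝ) (L : ι → List ((Fin n → ℝ) × ℝ)),
      (∀ i ∈ s, (PolyL (L i)).Nonempty) →
      Phi n (fun x => ∑ i ∈ s, a i * ind (PolyL (L i)) x) =
        ∑ i ∈ s, a i * epsSet (PolyL ((L i).map zr)) := by
  induction n with
  | zero =>
    intro ι s a L hne
    have hpt : ∀ x : Fin 0 → ℝ, x = (fun i => i.elim0) := fun x => funext fun i => i.elim0
    have hsub : Subsingleton (Fin 0 → ℝ) := ⟨fun a b => funext fun i => i.elim0⟩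
    show (∑ i ∈ s, a i * ind (PolyL (L i)) (fun i => Fin.elim0 i)) = _
    apply Finset.sum_congr rfl
    intro i hi
    congr 1
    -- ind = 1
    obtain ⟨x, hx⟩ := hne i hi
    rw [hpt x] at hx
    rw [ind_of_mem hx]
    -- epsSet = 1
    have hsym : PolyL ((L i).map zr) = -(PolyL ((L i).map zr)) := by
      ext v
      rw [Set.mem_neg]
      have : -v = v := Subsingleton.elim _ _
      rw [this]
    rw [epsSet, if_pos hsym]
    have h0 : Module.finrank ℝ (Submodule.span ℝ (PolyL ((L i).map zr))) = 0 := by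
      haveI := hsub
      haveI : Subsingleton (Submodule.span ℝ (PolyL ((L i).map zr))) :=
        ⟨fun a b => Subtype.ext (Subsingleton.elim _ _)⟩
      exact Module.finrank_zero_of_subsingleton
    rw [h0, pow_zero]
  | succ n ih =>
    intro ι s a L hne
    classical
    set Rp : ι → Set (Fin n → ℝ) := fun i => {v | Fin.cons 0 v ∈ PolyL ((L i).map zr)} with hRp
    have hslice_zr : ∀ (i : ι) (t : ℝ), PolyL ((sliceL (L i) t).map zr) = Rp i := by
      intro i t
      ext v
      rw [mem_zr_sliceL]
      rfl
    have hsliceNE : ∀ (i : ι) (t : ℝ), (PolyL (sliceL (L i) t)).Nonempty ↔ t ∈ Jset (L i) := by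
      intro i t
      constructor
      · rintro ⟨x, hx⟩
        exact mem_Jset.2 ⟨Fin.cons t x, mem_sliceL.1 hx, rfl⟩
      · intro ht
        obtain ⟨x, hx, hx0⟩ := mem_Jset.1 ht
        refine ⟨Fin.tail x, mem_sliceL.2 ?_⟩
        rw [← hx0, Fin.cons_self_tail]
        exact hx
    have hPhiInner : ∀ t : ℝ,
        Phi n (fun x => ∑ i ∈ s, a i * ind (PolyL (L i)) (Fin.cons t x)) =
          ∑ i ∈ s, (a i * epsSet (Rp i)) * ind (Jset (L i)) t := by
      intro t
      have hinner : (fun x => ∑ i ∈ s, a i * ind (PolyL (L i)) (Fin.cons t x)) =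
          fun x => ∑ i ∈ s.filter (fun i => t ∈ Jset (L i)),
            a i * ind (PolyL (sliceL (L i) t)) x := by
        funext x
        rw [Finset.sum_filter]
        apply Finset.sum_congr rfl
        intro i _
        by_cases ht : t ∈ Jset (L i)
        · rw [if_pos ht]
          congr 1
          exact ind_congr (Iff.symm mem_sliceL)
        · rw [if_neg ht]
          have hnm : Fin.cons t x ∉ PolyL (L i) := by
            intro hmem
            exact ht ((hsliceNE i t).1 ⟨x, mem_sliceL.2 hmem⟩)
          rw [ind_of_not_mem hnm, mul_zero]
      rw [hinner, ih (s.filter (fun i => t ∈ Jset (L i))) a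
        (fun i => sliceL (L i) t)
        (fun i hi => (hsliceNE i t).2 (Finset.mem_filter.1 hi).2)]
      rw [Finset.sum_filter]
      apply Finset.sum_congr rfl
      intro i _
      by_cases ht : t ∈ Jset (L i)
      · rw [if_pos ht, ind_of_mem ht, hslice_zr i t]; ring
      · rw [if_neg ht, ind_of_not_mem ht, mul_zero]
    show Phi1 (fun t => Phi n fun x => ∑ i ∈ s, a i * ind (PolyL (L i)) (Fin.cons t x)) = _
    have houter : (fun t => Phi n fun x => ∑ i ∈ s, a i * ind (PolyL (L i)) (Fin.cons t x)) =
        fun t => ∑ i ∈ s, (fun i t => (a i * epsSet (Rp i)) * ind (Jset (L i)) t) i t :=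
      funext hPhiInner
    rw [houter]
    have htame : ∀ i ∈ s, Tame ((fun i t => (a i * epsSet (Rp i)) * ind (Jset (L i)) t) i) :=
      fun i hi => Tame.smul _ (phiJ (L i) (hne i hi)).1
    rw [(Phi1_sum s _ htame).2]
    apply Finset.sum_congr rfl
    intro i hi
    rw [Phi1_smul _ (phiJ (L i) (hne i hi)).1, (phiJ (L i) (hne i hi)).2]
    rw [coneStep (PolyL ((L i).map zr)) (K_zero_mem (L i)) K_add_mem K_smul_mem]
    show (a i * epsSet (Rp i)) * _ = a i * (epsSet (Rp i) * _)
    ring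

-- === Section G : transport of the cone valuation identity to V ===

lemma epsSet_neg_image {V W : Type*} [AddCommGroup V] [Module ℝ V] [AddCommGroup W] [Module ℝ W]
    (e : V ≃ₗ[ℝ] W) (T : Set V) : -(⇑e '' T) = ⇑e '' (-T) := by
  ext w
  rw [Set.mem_neg]
  constructor
  · rintro ⟨v, hv, hev⟩
    exact ⟨-v, by rwa [Set.mem_neg, neg_neg], by rw [map_neg, hev, neg_neg]⟩
  · rintro ⟨v, hv, rfl⟩
    exact ⟨-v, by rwa [Set.mem_neg] at hv, by rw [map_neg]⟩

lemma epsSet_image {V W : Type*} [AddCommGroup V] [Module ℝ V] [AddCommGroup W] [Module ℝ W]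
    (e : V ≃ₗ[ℝ] W) (T : Set V) : epsSet (⇑e '' T) = epsSet T := by
  have hsym : (⇑e '' T = -(⇑e '' T)) ↔ (T = -T) := by
    rw [epsSet_neg_image]
    constructor
    · intro h
      exact (Set.image_eq_image e.injective).1 h
    · intro h
      rw [← h]
  have hrank : Module.finrank ℝ (Submodule.span ℝ (⇑e '' T)) =
      Module.finrank ℝ (Submodule.span ℝ T) := by
    rw [show (⇑e '' T) = ⇑(e : V →ₗ[ℝ] W) '' T from rfl, Submodule.span_image]
    exact LinearEquiv.finrank_map_eq e _
  rw [epsSet, epsSet]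
  by_cases h : T = -T
  · rw [if_pos (hsym.2 h), if_pos h, hrank]
  · rw [if_neg (fun hh => h (hsym.1 hh)), if_neg h]

section Vside

variable {V : Type*} [NormedAddCommGroup V] [InnerProductSpace ℝ V] [FiniteDimensional ℝ V]

lemma polycone_zero_mem {C : Set V} (hC : IsPolyCone C) : (0:V) ∈ C := by
  obtain ⟨s, rfl⟩ := hC
  simp only [Set.mem_iInter, Set.mem_setOf_eq]
  intro y _
  rw [inner_zero_left]

theorem starstarV {ι : Type*} (s : Finset ι) (a : ι → ℝ) (T : ι → Set V)
    (hT : ∀ i ∈ s, IsPolyCone (T i))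
    (hrel : ∀ v : V, ∑ i ∈ s, a i * ind (T i) v = 0) :
    ∑ i ∈ s, a i * epsSet (T i) = 0 := by
  classical
  set n := Module.finrank ℝ V with hn
  set b := Module.finBasis ℝ V with hb
  set e : V ≃ₗ[ℝ] (Fin n → ℝ) := b.equivFun with he
  set sC : ι → Finset V := fun i => if h : IsPolyCone (T i) then Exists.choose h else ∅ with hsC
  have hrep : ∀ i ∈ s, T i = ⋂ y ∈ sC i, {v : V | 0 ≤ ⟪v, y⟫} := by
    intro i hi
    rw [hsC]
    simp only
    rw [dif_pos (hT i hi)]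
    exact Exists.choose_spec (hT i hi)
  set coeff : V → Fin n → ℝ := fun y k => ⟪b k, y⟫ with hcoeff
  have hdot : ∀ (y : V) (w : Fin n → ℝ), dot (coeff y) w = ⟪e.symm w, y⟫ := by
    intro y w
    have : e.symm w = ∑ k, w k • b k := by
      rw [he, Module.Basis.equivFun_symm_apply]
    rw [this, sum_inner, dot]
    apply Finset.sum_congr rfl
    intro k _
    rw [real_inner_smul_left, hcoeff]
    ring
  set L : ι → List ((Fin n → ℝ) × ℝ) := fun i => ((sC i).toList).map (fun y => (coeff y, 0)) with hL
  have hmemL : ∀ (i : ι) (x : Fin n → ℝ), x ∈ PolyL (L i) ↔ ∀ y ∈ sC i, 0 ≤ ⟪e.symm x, y⟫ := by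
    intro i x
    constructor
    · intro h y hy
      have := h (coeff y, 0) (List.mem_map.2 ⟨y, (Finset.mem_toList).2 hy, rfl⟩)
      rwa [hdot] at this
    · intro h p hp
      obtain ⟨y, hy, rfl⟩ := List.mem_map.1 hp
      show (0:ℝ) ≤ dot (coeff y) x
      rw [hdot]
      exact h y ((Finset.mem_toList).1 hy)
  have hPoly : ∀ i ∈ s, PolyL (L i) = ⇑e '' (T i) := by
    intro i hi
    ext x
    rw [hmemL i x]
    constructor
    · intro h
      refine ⟨e.symm x, ?_, by simp⟩
      rw [hrep i hi]
      simp only [Set.mem_iInter, Set.mem_setOf_eq]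
      exact fun y hy => h y hy
    · rintro ⟨v, hv, rfl⟩
      rw [hrep i hi] at hv
      simp only [Set.mem_iInter, Set.mem_setOf_eq] at hv
      intro y hy
      simpa using hv y hy
  have hzr : ∀ i : ι, (L i).map zr = L i := by
    intro i
    rw [hL]
    simp only
    rw [List.map_map]
    rfl
  have hne : ∀ i ∈ s, (PolyL (L i)).Nonempty := by
    intro i hi
    rw [hPoly i hi]
    exact ⟨e 0, ⟨0, polycone_zero_mem (hT i hi), rfl⟩⟩
  have hfun : (fun x : Fin n → ℝ => ∑ i ∈ s, a i * ind (PolyL (L i)) x) = fun _ => (0:ℝ) := by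
    funext x
    have : ∀ i ∈ s, a i * ind (PolyL (L i)) x = a i * ind (T i) (e.symm x) := by
      intro i hi
      congr 1
      refine ind_congr ?_
      rw [hPoly i hi]
      constructor
      · rintro ⟨v, hv, hev⟩
        rwa [show e.symm x = v from by rw [← hev]; simp]
      · intro h
        exact ⟨e.symm x, h, by simp⟩
    rw [Finset.sum_congr rfl this, hrel (e.symm x)]
  have hB := lemB n s a L hne
  rw [hfun, Phi_zero n] at hB
  rw [hB]
  apply Finset.sum_congr rfl
  intro i hi
  rw [hzr i, hPoly i hi, epsSet_image]

end Vside

-- === Section H : tangent cones and localization ===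

section Vside2

variable {V : Type*} [NormedAddCommGroup V] [InnerProductSpace ℝ V] [FiniteDimensional ℝ V]

def Tang (sC : Finset V) (x : V) : Set V := {v | ∀ y ∈ sC, ⟪x, y⟫ = 0 → 0 ≤ ⟪v, y⟫}

omit [FiniteDimensional ℝ V] in
lemma tang_isPolyCone (sC : Finset V) (x : V) : IsPolyCone (Tang sC x) := by
  classical
  refine ⟨sC.filter (fun y => ⟪x, y⟫ = 0), ?_⟩
  ext v
  simp only [Tang, Set.mem_iInter, Set.mem_setOf_eq, Finset.mem_filter]
  constructor
  · intro h y hy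
    exact h y hy.1 hy.2
  · intro h y hy h0
    exact h y ⟨hy, h0⟩

omit [FiniteDimensional ℝ V] in
lemma ev_mem {sC : Finset V} {x v : V} (hx : ∀ y ∈ sC, 0 ≤ ⟪x, y⟫) (hv : v ∈ Tang sC x) :
    ∀ᶠ ε in nhdsWithin (0:ℝ) (Ioi 0), ∀ y ∈ sC, 0 ≤ ⟪x + ε • v, y⟫ := by
  rw [Filter.eventually_all_finset]
  intro y hy
  have hin : ∀ ε : ℝ, ⟪x + ε • v, y⟫ = ⟪x, y⟫ + ε * ⟪v, y⟫ := by
    intro ε; rw [inner_add_left, real_inner_smul_left]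
  rcases eq_or_lt_of_le (hx y hy) with heq | hpos
  · have h0 : ⟪x, y⟫ = 0 := heq.symm
    have hvy := hv y hy h0
    refine Eventually.mono self_mem_nhdsWithin ?_
    intro ε hε
    rw [hin, h0]
    have hε' : (0:ℝ) < ε := hε
    nlinarith
  · rcases le_or_gt 0 ⟪v, y⟫ with hb | hb
    · refine Eventually.mono self_mem_nhdsWithin ?_
      intro ε hε
      rw [hin]
      have hε' : (0:ℝ) < ε := hε
      nlinarith
    · have hmemI : Ioo (0:ℝ) (⟪x, y⟫ / (-⟪v, y⟫)) ∈ nhdsWithin (0:ℝ) (Ioi 0) :=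
        Ioo_mem_nhdsGT (div_pos hpos (by linarith))
      refine Eventually.mono hmemI ?_
      rintro ε ⟨h1, h2⟩
      rw [hin]
      rw [lt_div_iff₀ (by linarith : (0:ℝ) < -⟪v, y⟫)] at h2
      nlinarith

omit [FiniteDimensional ℝ V] in
lemma loc_event {sC : Finset V} {C : Set V} (hrep : C = ⋂ y ∈ sC, {v : V | 0 ≤ ⟪v, y⟫}) (x v : V) :
    ∀ᶠ ε in nhdsWithin (0:ℝ) (Ioi 0),
      ind C (x + ε • v) = (if x ∈ C then ind (Tang sC x) v else 0) := by
  have hmem : ∀ z : V, z ∈ C ↔ ∀ y ∈ sC, 0 ≤ ⟪z, y⟫ := by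
    intro z; rw [hrep]; simp
  by_cases hx : x ∈ C
  · rw [if_pos hx]
    by_cases hv : v ∈ Tang sC x
    · rw [ind_of_mem hv]
      refine (ev_mem ((hmem x).1 hx) hv).mono ?_
      intro ε hε
      rw [ind_of_mem ((hmem _).2 hε)]
    · rw [ind_of_not_mem hv]
      have hv' : ∃ y ∈ sC, ⟪x, y⟫ = 0 ∧ ⟪v, y⟫ < 0 := by
        by_contra h
        push_neg at h
        apply hv
        intro y hy h0
        exact h y hy h0
      obtain ⟨y, hy, h0, hneg⟩ := hv'
      refine Eventually.mono self_mem_nhdsWithin ?_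
      intro ε hε
      apply ind_of_not_mem
      intro hc
      have hC := (hmem _).1 hc y hy
      rw [inner_add_left, real_inner_smul_left, h0] at hC
      have hε' : (0:ℝ) < ε := hε
      nlinarith
  · rw [if_neg hx]
    have hw : ∃ y ∈ sC, ⟪x, y⟫ < 0 := by
      by_contra h
      push_neg at h
      exact hx ((hmem x).2 h)
    obtain ⟨y, hy, hxy⟩ := hw
    rcases le_or_gt ⟪v, y⟫ 0 with hb | hb
    · refine Eventually.mono self_mem_nhdsWithin ?_
      intro ε hε
      apply ind_of_not_mem
      intro hc
      have hC := (hmem _).1 hc y hy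
      rw [inner_add_left, real_inner_smul_left] at hC
      have hε' : (0:ℝ) < ε := hε
      nlinarith
    · have hmemI : Ioo (0:ℝ) ((-⟪x, y⟫) / ⟪v, y⟫) ∈ nhdsWithin (0:ℝ) (Ioi 0) :=
        Ioo_mem_nhdsGT (div_pos (by linarith) hb)
      refine Eventually.mono hmemI ?_
      rintro ε ⟨h1, h2⟩
      apply ind_of_not_mem
      intro hc
      have hC := (hmem _).1 hc y hy
      rw [inner_add_left, real_inner_smul_left] at hC
      rw [lt_div_iff₀ hb] at h2
      nlinarith

omit [FiniteDimensional ℝ V] in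
lemma loc_rel {ι : Type*} (s : Finset ι) (a : ι → ℝ) (C : ι → Set V) (sC : ι → Finset V)
    (hrep : ∀ i ∈ s, C i = ⋂ y ∈ sC i, {v : V | 0 ≤ ⟪v, y⟫})
    (hrel : ∀ w : V, ∑ i ∈ s, a i * ind (C i) w = 0) (x : V) :
    ∀ v : V, ∑ i ∈ s, a i * (if x ∈ C i then ind (Tang (sC i) x) v else 0) = 0 := by
  intro v
  have hev : ∀ᶠ ε in nhdsWithin (0:ℝ) (Ioi 0),
      ∀ i ∈ s, ind (C i) (x + ε • v) = (if x ∈ C i then ind (Tang (sC i) x) v else 0) := by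
    rw [Filter.eventually_all_finset]
    intro i hi
    exact loc_event (hrep i hi) x v
  obtain ⟨ε, hε⟩ := hev.exists
  calc ∑ i ∈ s, a i * (if x ∈ C i then ind (Tang (sC i) x) v else 0)
      = ∑ i ∈ s, a i * ind (C i) (x + ε • v) :=
        Finset.sum_congr rfl (fun i hi => by rw [hε i hi])
    _ = 0 := hrel _

end Vside2

-- === Section I : intrinsic interior characterization and key equality ===

section Vside3

variable {V : Type*} [NormedAddCommGroup V] [InnerProductSpace ℝ V] [FiniteDimensional ℝ V]

lemma affineSpan_coe_eq_span {C : Set V} (h0 : (0:V) ∈ C) :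
    (affineSpan ℝ C : Set V) = (Submodule.span ℝ C : Set V) := by
  apply subset_antisymm
  · have hle : affineSpan ℝ C ≤ (Submodule.span ℝ C).toAffineSubspace := by
      rw [affineSpan_le]
      intro z hz
      have : z ∈ Submodule.span ℝ C := Submodule.subset_span hz
      rwa [← Submodule.mem_toAffineSubspace] at this
    intro z hz
    have h2 := hle hz
    exact Submodule.mem_toAffineSubspace.1 h2
  · intro z hz
    refine Submodule.span_induction ?_ ?_ ?_ ?_ hz
    · intro w hw; exact subset_affineSpan ℝ C hw
    · exact subset_affineSpan ℝ C h0
    · intro u w _ _ hu' hw'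
      have hdir : u -ᵥ (0:V) ∈ (affineSpan ℝ C).direction :=
        AffineSubspace.vsub_mem_direction hu' (subset_affineSpan ℝ C h0)
      have := AffineSubspace.vadd_mem_of_mem_direction hdir hw'
      simpa [vsub_eq_sub, vadd_eq_add, add_comm] using this
    · intro c u _ hu'
      have hdir : u -ᵥ (0:V) ∈ (affineSpan ℝ C).direction :=
        AffineSubspace.vsub_mem_direction hu' (subset_affineSpan ℝ C h0)
      have hdir' : c • (u -ᵥ (0:V)) ∈ (affineSpan ℝ C).direction :=
        Submodule.smul_mem _ c hdir
      have := AffineSubspace.vadd_mem_of_mem_direction hdir' (subset_affineSpan ℝ C h0)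
      simpa [vsub_eq_sub, vadd_eq_add] using this

lemma mem_intrinsicInterior_iff {C : Set V} (h0 : (0:V) ∈ C) {x : V} :
    x ∈ intrinsicInterior ℝ C ↔
      x ∈ C ∧ ∃ ε > 0, ∀ v ∈ Submodule.span ℝ C, ‖v‖ < ε → x + v ∈ C := by
  rw [mem_intrinsicInterior]
  constructor
  · rintro ⟨x', hx', rfl⟩
    have hxC : (x' : V) ∈ C := Set.mem_preimage.1 (interior_subset hx')
    rw [mem_interior_iff_mem_nhds, Metric.mem_nhds_iff] at hx'
    obtain ⟨ε, hε, hball⟩ := hx'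
    refine ⟨hxC, ε, hε, ?_⟩
    intro v hv hnorm
    have hxspan : (x' : V) ∈ (Submodule.span ℝ C : Set V) := by
      rw [← affineSpan_coe_eq_span h0]; exact x'.2
    have hxv : (x' : V) + v ∈ affineSpan ℝ C := by
      have hm : (x' : V) + v ∈ (Submodule.span ℝ C : Set V) :=
        Submodule.add_mem _ hxspan hv
      rw [← affineSpan_coe_eq_span h0] at hm; exact hm
    have hmem : (⟨(x' : V) + v, hxv⟩ : affineSpan ℝ C) ∈ Metric.ball x' ε := by
      rw [Metric.mem_ball, Subtype.dist_eq, dist_eq_norm]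
      simpa using hnorm
    exact hball hmem
  · rintro ⟨hxC, ε, hε, hb⟩
    have hx : x ∈ affineSpan ℝ C := subset_affineSpan ℝ C hxC
    refine ⟨⟨x, hx⟩, ?_, rfl⟩
    rw [mem_interior_iff_mem_nhds, Metric.mem_nhds_iff]
    refine ⟨ε, hε, ?_⟩
    intro y hy
    rw [Metric.mem_ball, Subtype.dist_eq, dist_eq_norm] at hy
    show (y : V) ∈ C
    have hyspan : (y : V) ∈ (Submodule.span ℝ C : Set V) := by
      rw [← affineSpan_coe_eq_span h0]; exact y.2
    have hxspan : x ∈ (Submodule.span ℝ C : Set V) := by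
      rw [← affineSpan_coe_eq_span h0]; exact hx
    have := hb ((y : V) - x) (Submodule.sub_mem _ hyspan hxspan) hy
    simpa using this

lemma memC_iff {sC : Finset V} {z : V} :
    z ∈ (⋂ y ∈ sC, {v : V | 0 ≤ ⟪v, y⟫}) ↔ ∀ y ∈ sC, 0 ≤ ⟪z, y⟫ := by simp

lemma C_subset_tang {sC : Finset V} {C : Set V}
    (hrep : C = ⋂ y ∈ sC, {v : V | 0 ≤ ⟪v, y⟫}) (x : V) : C ⊆ Tang sC x := by
  intro z hz
  rw [hrep] at hz
  intro y hy _
  exact memC_iff.1 hz y hy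

lemma tang_subset_span {sC : Finset V} {C : Set V}
    (hrep : C = ⋂ y ∈ sC, {v : V | 0 ≤ ⟪v, y⟫}) {x : V} (hx : x ∈ C) :
    Tang sC x ⊆ (Submodule.span ℝ C : Set V) := by
  intro v hv
  have hx' : ∀ y ∈ sC, 0 ≤ ⟪x, y⟫ := by rw [hrep] at hx; exact fun y hy => memC_iff.1 hx y hy
  have hev := (ev_mem hx' hv).and (eventually_mem_nhdsWithin)
  obtain ⟨ε, hmem, hpos⟩ := hev.exists
  have hεpos : (0:ℝ) < ε := hpos
  have hxv : x + ε • v ∈ C := by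
    rw [hrep, memC_iff]
    exact hmem
  have h1 : x + ε • v ∈ Submodule.span ℝ C := Submodule.subset_span hxv
  have h2 : x ∈ Submodule.span ℝ C := Submodule.subset_span hx
  have h3 : ε • v ∈ Submodule.span ℝ C := by
    have := Submodule.sub_mem _ h1 h2
    simpa using this
  have h4 : ε⁻¹ • (ε • v) ∈ Submodule.span ℝ C := Submodule.smul_mem _ _ h3
  rwa [smul_smul, inv_mul_cancel₀ (ne_of_gt hεpos), one_smul] at h4

lemma span_tang_eq {sC : Finset V} {C : Set V}
    (hrep : C = ⋂ y ∈ sC, {v : V | 0 ≤ ⟪v, y⟫}) {x : V} (hx : x ∈ C) :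
    Submodule.span ℝ (Tang sC x) = Submodule.span ℝ C :=
  le_antisymm (Submodule.span_le.2 (tang_subset_span hrep hx))
    (Submodule.span_mono (C_subset_tang hrep x))

lemma relint_iff_symm {sC : Finset V} {C : Set V}
    (hrep : C = ⋂ y ∈ sC, {v : V | 0 ≤ ⟪v, y⟫}) {x : V} (hx : x ∈ C) :
    x ∈ intrinsicInterior ℝ C ↔ Tang sC x = -(Tang sC x) := by
  have h0C : (0:V) ∈ C := polycone_zero_mem ⟨sC, hrep⟩
  have hmem : ∀ z : V, z ∈ C ↔ ∀ y ∈ sC, 0 ≤ ⟪z, y⟫ := by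
    intro z; rw [hrep]; exact memC_iff
  constructor
  · intro hrel
    obtain ⟨_, ε, hε, hb⟩ := (mem_intrinsicInterior_iff h0C).1 hrel
    have hkey : ∀ w ∈ Tang sC x, -w ∈ Tang sC x := by
      intro w hw
      by_cases hw0 : w = 0
      · rw [hw0, neg_zero]; exact hw0 ▸ hw
      · have hnw : (0:ℝ) < ‖w‖ := norm_pos_iff.2 hw0
        set c := ε / (2 * ‖w‖) with hc
        have hc0 : 0 < c := by positivity
        have hcw : ‖(-c) • w‖ < ε := by
          rw [norm_smul, norm_neg]
          show ‖c‖ * ‖w‖ < ε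
          rw [Real.norm_eq_abs, abs_of_pos hc0, hc]
          rw [div_mul_eq_mul_div, mul_comm (2:ℝ) ‖w‖, ← div_div]
          rw [mul_div_assoc, div_self (ne_of_gt hnw)]
          linarith
        have hmemv : (-c) • w ∈ Submodule.span ℝ C :=
          Submodule.smul_mem _ _ (tang_subset_span hrep hx hw)
        have hxc : x + (-c) • w ∈ C := hb _ hmemv hcw
        intro y hy h0
        have h1 := (hmem _).1 hxc y hy
        rw [inner_add_left, real_inner_smul_left, h0] at h1
        rw [inner_neg_left]
        nlinarith
    ext v
    rw [Set.mem_neg]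
    constructor
    · intro h
      exact hkey v h
    · intro h
      have := hkey (-v) h
      rwa [neg_neg] at this
  · intro hsym
    -- Tang is a submodule
    have hTadd : ∀ v ∈ Tang sC x, ∀ w ∈ Tang sC x, v + w ∈ Tang sC x := by
      intro v hv w hw y hy h0
      rw [inner_add_left]
      have := hv y hy h0
      have := hw y hy h0
      linarith
    have hT0 : (0:V) ∈ Tang sC x := by
      intro y hy _
      rw [inner_zero_left]
    have hTsmul : ∀ (c : ℝ), ∀ v ∈ Tang sC x, c • v ∈ Tang sC x := by
      intro c v hv
      rcases le_or_gt 0 c with hc | hc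
      · intro y hy h0
        rw [real_inner_smul_left]
        exact mul_nonneg hc (hv y hy h0)
      · have hnv : -v ∈ Tang sC x := by
          have : v ∈ -(Tang sC x) := hsym ▸ hv
          rwa [Set.mem_neg] at this
        intro y hy h0
        rw [real_inner_smul_left]
        have := hnv y hy h0
        rw [inner_neg_left] at this
        nlinarith
    set TS : Submodule ℝ V :=
      { carrier := Tang sC x
        add_mem' := fun ha hb => hTadd _ ha _ hb
        zero_mem' := hT0
        smul_mem' := fun c _ hv => hTsmul c _ hv } with hTS
    have hspan_sub : (Submodule.span ℝ C : Set V) ⊆ Tang sC x := by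
      have hle : Submodule.span ℝ C ≤ TS := Submodule.span_le.2 (C_subset_tang hrep x)
      exact fun v hv => hle hv
    have hev : ∀ᶠ v in nhds (0:V),
        ∀ y ∈ sC.filter (fun y => ¬ (⟪x, y⟫ = 0)), 0 < ⟪x + v, y⟫ := by
      rw [Filter.eventually_all_finset]
      intro y hy
      have hy1 := (Finset.mem_filter.1 hy).1
      have hy2 := (Finset.mem_filter.1 hy).2
      have hxy : 0 < ⟪x, y⟫ := lt_of_le_of_ne ((hmem x).1 hx y hy1) (Ne.symm hy2)
      have hcont : Continuous fun v : V => ⟪x + v, y⟫ :=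
        (continuous_const.add continuous_id).inner continuous_const
      have hopen : IsOpen {v : V | 0 < ⟪x + v, y⟫} := isOpen_lt continuous_const hcont
      have h0m : (0:V) ∈ {v : V | 0 < ⟪x + v, y⟫} := by
        simpa using hxy
      exact hopen.mem_nhds h0m
    rw [Metric.eventually_nhds_iff] at hev
    obtain ⟨ε, hε, hb⟩ := hev
    refine (mem_intrinsicInterior_iff h0C).2 ⟨hx, ε, hε, ?_⟩
    intro v hv hnorm
    rw [hmem]
    intro y hy
    by_cases h0 : ⟪x, y⟫ = 0
    · have hvT : v ∈ Tang sC x := hspan_sub hv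
      have := hvT y hy h0
      rw [inner_add_left, h0]
      linarith
    · have hd : dist v 0 < ε := by simpa [dist_eq_norm] using hnorm
      have := hb hd y (Finset.mem_filter.2 ⟨hy, h0⟩)
      linarith

lemma key_eq {C : Set V} {sC : Finset V} (hrep : C = ⋂ y ∈ sC, {v : V | 0 ≤ ⟪v, y⟫})
    {x : V} (hx : x ∈ C) :
    (-1:ℝ) ^ sdim C * ind (intrinsicInterior ℝ C) x = epsSet (Tang sC x) := by
  have hspan := span_tang_eq hrep hx
  by_cases hsym : Tang sC x = -(Tang sC x)
  · have hrel : x ∈ intrinsicInterior ℝ C := (relint_iff_symm hrep hx).2 hsym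
    rw [ind_of_mem hrel, epsSet, if_pos hsym, hspan, sdim]
    ring
  · have hrel : x ∉ intrinsicInterior ℝ C := fun h => hsym ((relint_iff_symm hrep hx).1 h)
    rw [ind_of_not_mem hrel, epsSet, if_neg hsym]
    ring

end Vside3

-- === Section J : relint description and span membership ===

section Vside4

variable {V : Type*} [NormedAddCommGroup V] [InnerProductSpace ℝ V] [FiniteDimensional ℝ V]

lemma relint_repr {C : Set V} {s : Finset V} (hrep : C = ⋂ y ∈ s, {v : V | 0 ≤ ⟪v, y⟫}) :
    intrinsicInterior ℝ C =
      {x | x ∈ C ∧ ∀ y ∈ s.filter (fun y => ∃ z ∈ C, ⟪z, y⟫ ≠ 0), 0 < ⟪x, y⟫} := by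
  classical
  have hmem : ∀ z : V, z ∈ C ↔ ∀ y ∈ s, 0 ≤ ⟪z, y⟫ := by
    intro z; rw [hrep]; exact memC_iff
  ext x
  simp only [Set.mem_setOf_eq]
  constructor
  · intro hrel
    have hxC : x ∈ C := intrinsicInterior_subset hrel
    have hsym := (relint_iff_symm hrep hxC).1 hrel
    refine ⟨hxC, ?_⟩
    intro y hy
    obtain ⟨hys, z, hz, hnz⟩ : y ∈ s ∧ ∃ z ∈ C, ⟪z, y⟫ ≠ 0 := by
      have := Finset.mem_filter.1 hy
      exact ⟨this.1, this.2⟩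
    rcases lt_or_eq_of_le ((hmem x).1 hxC y hys) with h | h
    · exact h
    · exfalso
      have hzy : 0 < ⟪z, y⟫ := lt_of_le_of_ne ((hmem z).1 hz y hys) (Ne.symm hnz)
      have hzT : z ∈ Tang s x := C_subset_tang hrep x hz
      have hnzT : -z ∈ Tang s x := by
        have : z ∈ -(Tang s x) := hsym ▸ hzT
        rwa [Set.mem_neg] at this
      have := hnzT y hys h.symm
      rw [inner_neg_left] at this
      linarith
  · rintro ⟨hxC, hpos⟩
    refine (relint_iff_symm hrep hxC).2 ?_
    have hkey : ∀ v ∈ Tang s x, -v ∈ Tang s x := by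
      intro v hv y hys h0
      -- y is not in the filter
      have hy0 : ∀ z ∈ C, ⟪z, y⟫ = 0 := by
        by_contra hcon
        push_neg at hcon
        obtain ⟨z, hz, hnz⟩ := hcon
        have hymem : y ∈ s.filter (fun y => ∃ z ∈ C, ⟪z, y⟫ ≠ 0) :=
          Finset.mem_filter.2 ⟨hys, z, hz, hnz⟩
        have := hpos y hymem
        rw [h0] at this
        exact lt_irrefl 0 this
      have hspan0 : ∀ w ∈ Submodule.span ℝ C, ⟪w, y⟫ = 0 := by
        intro w hw
        refine Submodule.span_induction ?_ ?_ ?_ ?_ hw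
        · intro z hz; exact hy0 z hz
        · rw [inner_zero_left]
        · intro u w' _ _ hu hw'
          rw [inner_add_left, hu, hw']; ring
        · intro c u _ hu
          rw [real_inner_smul_left, hu]; ring
      have hvy : ⟪v, y⟫ = 0 := hspan0 v (tang_subset_span hrep hxC hv)
      rw [inner_neg_left, hvy]
      linarith
    ext v
    rw [Set.mem_neg]
    constructor
    · intro h; exact hkey v h
    · intro h
      have := hkey (-v) h
      rwa [neg_neg] at this

lemma relint_mem_span {C : Set V} (hC : IsPolyCone C) :
    ind (intrinsicInterior ℝ C) ∈
      Submodule.span ℝ {f : V → ℝ | ∃ D : Set V, IsPolyCone D ∧ f = ind D} := by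
  classical
  obtain ⟨s, hrep⟩ := hC
  have hmem : ∀ z : V, z ∈ C ↔ ∀ y ∈ s, 0 ≤ ⟪z, y⟫ := by
    intro z; rw [hrep]; exact memC_iff
  set s1 := s.filter (fun y => ∃ z ∈ C, ⟪z, y⟫ ≠ 0) with hs1
  set F : Finset V → Set V := fun t => C ∩ ⋂ y ∈ t, {v : V | ⟪v, y⟫ ≤ 0} with hF
  have hFmem : ∀ (t : Finset V) (v : V), v ∈ F t ↔ v ∈ C ∧ ∀ y ∈ t, ⟪v, y⟫ ≤ 0 := by
    intro t v
    rw [hF]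
    simp only [Set.mem_inter_iff, Set.mem_iInter, Set.mem_setOf_eq]
  have hFpoly : ∀ t : Finset V, IsPolyCone (F t) := by
    intro t
    refine ⟨s ∪ t.image (fun y => -y), ?_⟩
    ext v
    rw [hFmem]
    simp only [Set.mem_iInter, Set.mem_setOf_eq, Finset.mem_union, Finset.mem_image]
    constructor
    · rintro ⟨hvC, hvt⟩ y hy
      rcases hy with hy | ⟨y', hy', rfl⟩
      · exact (hmem v).1 hvC y hy
      · rw [inner_neg_right]
        linarith [hvt y' hy']
    · intro h
      constructor
      · exact (hmem v).2 (fun y hy => h y (Or.inl hy))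
      · intro y hy
        have := h (-y) (Or.inr ⟨y, hy, rfl⟩)
        rw [inner_neg_right] at this
        linarith
  have hkey : ind (intrinsicInterior ℝ C) =
      fun x => ∑ t ∈ s1.powerset, (-1:ℝ)^t.card * ind (F t) x := by
    funext x
    by_cases hxC : x ∈ C
    · have hFx : ∀ t ∈ s1.powerset, (-1:ℝ)^t.card * ind (F t) x =
          ∏ y ∈ t, (-(if ⟪x, y⟫ ≤ 0 then (1:ℝ) else 0)) := by
        intro t _
        have hprod : ∏ y ∈ t, (-(if ⟪x, y⟫ ≤ 0 then (1:ℝ) else 0)) =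
            (-1:ℝ)^t.card * ∏ y ∈ t, (if ⟪x, y⟫ ≤ 0 then (1:ℝ) else 0) := by
          rw [show (fun y => -(if ⟪x, y⟫ ≤ 0 then (1:ℝ) else 0)) =
            (fun y => (-1) * (if ⟪x, y⟫ ≤ 0 then (1:ℝ) else 0)) from by funext y; ring]
          rw [Finset.prod_mul_distrib, Finset.prod_const]
        rw [hprod]
        congr 1
        by_cases hall : ∀ y ∈ t, ⟪x, y⟫ ≤ 0
        · rw [ind_of_mem ((hFmem t x).2 ⟨hxC, hall⟩)]
          rw [Finset.prod_congr rfl (fun y hy => if_pos (hall y hy)), Finset.prod_const_one]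
        · push_neg at hall
          obtain ⟨y, hy, hpos⟩ := hall
          rw [ind_of_not_mem (fun hc => absurd (((hFmem t x).1 hc).2 y hy) (not_le.2 hpos))]
          rw [eq_comm]
          exact Finset.prod_eq_zero hy (if_neg (not_le.2 hpos))
      rw [Finset.sum_congr rfl hFx]
      have hexp := Finset.prod_add (fun y => -(if ⟪x, y⟫ ≤ 0 then (1:ℝ) else 0))
        (fun _ => (1:ℝ)) s1
      simp only [Finset.prod_const_one, mul_one] at hexp
      rw [← hexp]
      -- now LHS indicator
      rw [relint_repr hrep]
      by_cases hall : ∀ y ∈ s1, 0 < ⟪x, y⟫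
      · have hone : ∀ y ∈ s1, ((-if ⟪x, y⟫ ≤ 0 then (1:ℝ) else 0) + 1) = 1 := by
          intro y hy
          rw [if_neg (not_le.2 (hall y hy))]
          ring
        rw [ind_of_mem (by exact ⟨hxC, hall⟩), Finset.prod_congr rfl hone,
          Finset.prod_const_one]
      · push_neg at hall
        obtain ⟨y, hy, hnpos⟩ := hall
        have h0 : ⟪x, y⟫ = 0 :=
          le_antisymm hnpos ((hmem x).1 hxC y (Finset.mem_filter.1 hy).1)
        rw [ind_of_not_mem (by
          intro hc
          have := hc.2 y hy
          rw [h0] at this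
          exact lt_irrefl 0 this)]
        rw [eq_comm]
        refine Finset.prod_eq_zero hy ?_
        rw [if_pos (le_of_eq h0)]
        ring
    · rw [ind_of_not_mem (fun h => hxC (intrinsicInterior_subset h))]
      rw [eq_comm]
      apply Finset.sum_eq_zero
      intro t _
      rw [ind_of_not_mem (fun hc => hxC ((hFmem t x).1 hc).1), mul_zero]
  rw [hkey]
  have hfun : (fun x => ∑ t ∈ s1.powerset, (-1:ℝ)^t.card * ind (F t) x) =
      ∑ t ∈ s1.powerset, ((-1:ℝ)^t.card • ind (F t)) := by
    funext x
    rw [Finset.sum_apply]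
    apply Finset.sum_congr rfl
    intro t _
    rw [Pi.smul_apply, smul_eq_mul]
  rw [hfun]
  apply Submodule.sum_mem
  intro t _
  exact Submodule.smul_mem _ _ (Submodule.subset_span ⟨F t, hFpoly t, rfl⟩)

theorem star {ι : Type*} (s : Finset ι) (a : ι → ℝ) (C : ι → Set V)
    (hC : ∀ i ∈ s, IsPolyCone (C i))
    (hrel : ∀ w : V, ∑ i ∈ s, a i * ind (C i) w = 0) (x : V) :
    ∑ i ∈ s, a i * ((-1:ℝ)^ sdim (C i) * ind (intrinsicInterior ℝ (C i)) x) = 0 := by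
  classical
  set sC : ι → Finset V := fun i => if h : IsPolyCone (C i) then Exists.choose h else ∅ with hsC
  have hrep : ∀ i ∈ s, C i = ⋂ y ∈ sC i, {v : V | 0 ≤ ⟪v, y⟫} := by
    intro i hi
    rw [hsC]
    simp only
    rw [dif_pos (hC i hi)]
    exact Exists.choose_spec (hC i hi)
  have hloc := loc_rel s a C sC hrep hrel x
  set s' := s.filter (fun i => x ∈ C i) with hs'
  have hrel' : ∀ v : V, ∑ i ∈ s', a i * ind (Tang (sC i) x) v = 0 := by
    intro v
    have h1 := hloc v
    have h2 : ∑ i ∈ s, (if x ∈ C i then a i * ind (Tang (sC i) x) v else 0) =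
        ∑ i ∈ s, a i * (if x ∈ C i then ind (Tang (sC i) x) v else 0) := by
      apply Finset.sum_congr rfl
      intro i _
      by_cases hxi : x ∈ C i
      · rw [if_pos hxi, if_pos hxi]
      · rw [if_neg hxi, if_neg hxi, mul_zero]
    rw [hs', Finset.sum_filter, h2]
    exact h1
  have hss := starstarV s' a (fun i => Tang (sC i) x)
    (fun i _ => tang_isPolyCone _ x) hrel'
  have hgoal : ∑ i ∈ s, a i * ((-1:ℝ)^ sdim (C i) * ind (intrinsicInterior ℝ (C i)) x)
      = ∑ i ∈ s', a i * epsSet (Tang (sC i) x) := by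
    rw [hs', Finset.sum_filter]
    apply Finset.sum_congr rfl
    intro i hi
    by_cases hxi : x ∈ C i
    · rw [if_pos hxi, key_eq (hrep i hi) hxi]
    · rw [if_neg hxi,
        ind_of_not_mem (fun h => hxi (intrinsicInterior_subset h)), mul_zero, mul_zero]
  rw [hgoal, hss]

end Vside4

-- === Section L : final theorem ===

set_option synthInstance.maxHeartbeats 1000000 in
theorem stmt18' {V : Type*} [NormedAddCommGroup V] [InnerProductSpace ℝ V] [FiniteDimensional ℝ V]
    {W : Type*} [AddCommGroup W] [Module ℝ W]
    (φ : (Submodule.span ℝ {f : V → ℝ | ∃ C : Set V, IsPolyCone C ∧ f = ind C}) →ₗ[ℝ] W) :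
    ∃ ψ : (Submodule.span ℝ {f : V → ℝ | ∃ C : Set V, IsPolyCone C ∧ f = ind C}) →ₗ[ℝ] W,
      ∀ (C : Set V) (hC : IsPolyCone C)
        (h : ind (intrinsicInterior ℝ C) ∈ Submodule.span ℝ {f : V → ℝ | ∃ C : Set V, IsPolyCone C ∧ f = ind C}),
        ψ ⟨ind C, Submodule.subset_span ⟨C, hC, rfl⟩⟩ =
          ((-1 : ℝ) ^ sdim C) • φ ⟨ind (intrinsicInterior ℝ C), h⟩ := by
  classical
  set κ : {C : Set V // IsPolyCone C} → Submodule.span ℝ {f : V → ℝ | ∃ C : Set V, IsPolyCone C ∧ f = ind C} :=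
    fun C => ⟨ind C.1, Submodule.subset_span ⟨C.1, C.2, rfl⟩⟩ with hκ
  set π : ({C : Set V // IsPolyCone C} →₀ ℝ) →ₗ[ℝ] Submodule.span ℝ {f : V → ℝ | ∃ C : Set V, IsPolyCone C ∧ f = ind C} :=
    Finsupp.linearCombination ℝ κ with hπ
  have hπsurj : LinearMap.range π = ⊤ := by
    rw [hπ, Finsupp.range_linearCombination, eq_top_iff]
    rintro ⟨f, hf⟩ _
    refine Submodule.span_induction
      (p := fun g hg => (⟨g, hg⟩ : Submodule.span ℝ {f : V → ℝ | ∃ C : Set V, IsPolyCone C ∧ f = ind C}) ∈ Submodule.span ℝ (Set.range κ))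
      ?_ ?_ ?_ ?_ hf
    · rintro g ⟨C, hC, rfl⟩
      exact Submodule.subset_span ⟨⟨C, hC⟩, rfl⟩
    · exact Submodule.zero_mem _
    · intro g g' hg hg' h1 h2
      exact Submodule.add_mem _ h1 h2
    · intro c g hg h1
      exact Submodule.smul_mem _ c h1
  set θ : ({C : Set V // IsPolyCone C} →₀ ℝ) →ₗ[ℝ] W :=
    Finsupp.linearCombination ℝ
      (fun C : {C : Set V // IsPolyCone C} =>
        ((-1:ℝ) ^ sdim C.1) • φ ⟨ind (intrinsicInterior ℝ C.1), relint_mem_span C.2⟩) with hθ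
  have hker : LinearMap.ker π ≤ LinearMap.ker θ := by
    intro l hl
    rw [LinearMap.mem_ker] at hl ⊢
    have hval : ∑ C ∈ l.support, l C • ind C.1 = (0 : V → ℝ) := by
      have hcong := congrArg (Subtype.val) hl
      rw [hπ, Finsupp.linearCombination_apply, Finsupp.sum] at hcong
      simpa [hκ] using hcong
    have hrel : ∀ w : V, ∑ C ∈ l.support, l C * ind C.1 w = 0 := by
      intro w
      have := congrFun hval w
      rw [Finset.sum_apply] at this
      simpa using this
    have hstar := star l.support l (fun C => C.1) (fun C _ => C.2) hrel
    rw [hθ, Finsupp.linearCombination_apply, Finsupp.sum]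
    have hφ : ∑ C ∈ l.support,
        l C • (((-1:ℝ) ^ sdim C.1) • φ ⟨ind (intrinsicInterior ℝ C.1), relint_mem_span C.2⟩)
        = φ (∑ C ∈ l.support,
            l C • (((-1:ℝ) ^ sdim C.1) •
              (⟨ind (intrinsicInterior ℝ C.1), relint_mem_span C.2⟩ :
                Submodule.span ℝ {f : V → ℝ | ∃ C : Set V, IsPolyCone C ∧ f = ind C}))) := by
      rw [map_sum]
      apply Finset.sum_congr rfl
      intro C _
      rw [map_smul, map_smul]
    rw [hφ]
    have harg : (∑ C ∈ l.support,
        l C • (((-1:ℝ) ^ sdim C.1) •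
          (⟨ind (intrinsicInterior ℝ C.1), relint_mem_span C.2⟩ :
            Submodule.span ℝ {f : V → ℝ | ∃ C : Set V, IsPolyCone C ∧ f = ind C}))) = 0 := by
      apply Subtype.ext
      push_cast
      funext w
      rw [Finset.sum_apply]
      have : ∀ C ∈ l.support,
          (l C • (((-1:ℝ) ^ sdim C.1) • ind (intrinsicInterior ℝ C.1))) w =
          l C * (((-1:ℝ) ^ sdim C.1) * ind (intrinsicInterior ℝ C.1) w) := by
        intro C _
        rfl
      rw [Finset.sum_congr rfl this]
      exact hstar w
    rw [harg, map_zero]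
  haveI hproj : Module.Projective ℝ ↥(Submodule.span ℝ {f : V → ℝ | ∃ C : Set V, IsPolyCone C ∧ f = ind C}) := Module.Projective.of_free
  obtain ⟨σ, hσ⟩ := LinearMap.exists_rightInverse_of_surjective π hπsurj
  refine ⟨θ.comp σ, ?_⟩
  intro C hC h
  set m : Submodule.span ℝ {f : V → ℝ | ∃ C : Set V, IsPolyCone C ∧ f = ind C} := ⟨ind C, Submodule.subset_span ⟨C, hC, rfl⟩⟩ with hm
  have h1 : π (σ m) = m := by
    have := congrArg (fun f => f m) hσ
    simpa using this
  have h2 : π (Finsupp.single ⟨C, hC⟩ 1) = m := by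
    rw [hπ, Finsupp.linearCombination_single, one_smul]
  have h3 : σ m - Finsupp.single ⟨C, hC⟩ 1 ∈ LinearMap.ker π := by
    rw [LinearMap.mem_ker, map_sub, h1, h2, sub_self]
  have h4 := hker h3
  rw [LinearMap.mem_ker, map_sub, sub_eq_zero] at h4
  show θ (σ m) = _
  rw [h4, hθ, Finsupp.linearCombination_single, one_smul]


theorem stmt18 {W : Type*} [AddCommGroup W] [Module ℝ W]
    (φ : (Submodule.span ℝ {f : V → ℝ | ∃ C : Set V, IsPolyCone C ∧ f = ind C}) →ₗ[ℝ] W) :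
    ∃ ψ : (Submodule.span ℝ {f : V → ℝ | ∃ C : Set V, IsPolyCone C ∧ f = ind C}) →ₗ[ℝ] W,
      ∀ (C : Set V) (hC : IsPolyCone C)
        (h : ind (intrinsicInterior ℝ C) ∈ Submodule.span ℝ {f : V → ℝ | ∃ C : Set V, IsPolyCone C ∧ f = ind C}),
        ψ ⟨ind C, Submodule.subset_span ⟨C, hC, rfl⟩⟩ =
          ((-1 : ℝ) ^ sdim C) • φ ⟨ind (intrinsicInterior ℝ C), h⟩ := stmt18' φ
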